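/- arXiv:2010.08936 — 7 statements merged into one kernel-verified Lean document; each statement's English description precedes it below -/
import Mathlib

section
/- A minimal densest subgraph has no cut vertex: if H is a connected subgraph of G whose density g(H)=m(H)/(n(H)-1) is maximum among all connected subgraphs of G, and no proper connected subgraph of H attains this maximum density, then H is 2-connected (has no cut vertex). -/
open scoped BigOperators

variable {V : Type*}

/-- Density of a subgraph: m(H)/(n(H)-1). -/
noncomputable def density (G : SimpleGraph V) (H : G.Subgraph) : ℝ :=
  (H.edgeSet.ncard : ℝ) / ((H.verts.ncard : ℝ) - 1)

/-- Fractional arboricity: maximum density over connected subgraphs. -/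
noncomputable def fracArboricity (G : SimpleGraph V) : ℝ :=
  sSup {d : ℝ | ∃ H : G.Subgraph, H.Connected ∧ d = density G H}

/-- A densest subgraph: connected, attaining the maximum density. -/
def IsDensest (G : SimpleGraph V) (H : G.Subgraph) : Prop :=
  H.Connected ∧ density G H = fracArboricity G

/-- A minimal densest subgraph: no proper subgraph is densest. -/
def IsMinimalDensest (G : SimpleGraph V) (H : G.Subgraph) : Prop :=
  IsDensest G H ∧ ∀ K : G.Subgraph, K < H → ¬ IsDensest G K

lemma density_le_bound [Fintype V] (G : SimpleGraph V) (K : G.Subgraph) :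
    density G K ≤ (Nat.card (Sym2 V) : ℝ) := by
  have hB : (K.edgeSet.ncard : ℝ) ≤ (Nat.card (Sym2 V) : ℝ) := by
    have := Set.ncard_le_ncard (Set.subset_univ K.edgeSet) Set.finite_univ
    rw [Set.ncard_univ] at this
    exact_mod_cast this
  have h0 : (0:ℝ) ≤ (Nat.card (Sym2 V) : ℝ) := Nat.cast_nonneg _
  have he0 : (0:ℝ) ≤ (K.edgeSet.ncard : ℝ) := Nat.cast_nonneg _
  unfold density
  rcases le_or_gt K.verts.ncard 1 with h | h
  · have : ((K.verts.ncard : ℝ) - 1) ≤ 0 := by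
      have : (K.verts.ncard : ℝ) ≤ 1 := by exact_mod_cast h
      linarith
    exact (div_nonpos_iff.mpr (Or.inl ⟨he0, this⟩)).trans h0
  · have h2 : (2:ℕ) ≤ K.verts.ncard := h
    have hd : (1:ℝ) ≤ (K.verts.ncard : ℝ) - 1 := by
      have : (2:ℝ) ≤ (K.verts.ncard : ℝ) := by exact_mod_cast h2
      linarith
    exact (div_le_self he0 hd).trans hB

lemma density_le_fracArboricity [Fintype V] (G : SimpleGraph V) (K : G.Subgraph)
    (hK : K.Connected) : density G K ≤ fracArboricity G := by
  apply le_csSup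
  · exact ⟨(Nat.card (Sym2 V) : ℝ), by rintro d ⟨L, _, rfl⟩; exact density_le_bound G L⟩
  · exact ⟨K, hK, rfl⟩

lemma mediant_le_max {m1 m2 s t : ℝ} (hs : 0 < s) (ht : 0 < t) :
    (m1 + m2) / (s + t) ≤ max (m1 / s) (m2 / t) := by
  rcases le_total (m1 / s) (m2 / t) with h | h
  · refine le_max_of_le_right ?_
    rw [div_le_div_iff₀ hs ht] at h
    rw [div_le_div_iff₀ (by linarith) ht]
    nlinarith
  · refine le_max_of_le_left ?_
    rw [div_le_div_iff₀ ht hs] at h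
    rw [div_le_div_iff₀ (by linarith) hs]
    nlinarith

lemma induce_union_singleton_connected {G : SimpleGraph V} (H : G.Subgraph)
    (hH : H.Connected) {v : V} (hv : v ∈ H.verts) {U : Set V} (hUsub : U ⊆ H.verts)
    (hvU : v ∉ U) (hcl : ∀ x ∈ U, ∀ y, H.Adj x y → y ≠ v → y ∈ U) :
    (H.induce (U ∪ {v})).Connected := by
  set K := H.induce (U ∪ {v}) with hKdef
  have hvK : v ∈ K.verts := Or.inr rfl
  have key : ∀ (x y : H.verts) (_ : H.coe.Walk x y) (hyv : (y : V) = v) (hx : (x : V) ∈ U),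
      K.coe.Reachable ⟨(x : V), Or.inl hx⟩ ⟨v, hvK⟩ := by
    intro x y p
    induction p with
    | nil =>
      intro hyv hx
      rw [hyv] at hx
      exact absurd hx hvU
    | @cons a b c hab q ih =>
      intro hcv hx
      have hadj : H.Adj (a : V) (b : V) := hab
      by_cases hbv : (b : V) = v
      · have hK : K.Adj (a : V) v := ⟨Or.inl hx, Or.inr rfl, hbv ▸ hadj⟩
        have hK' : K.coe.Adj ⟨(a : V), Or.inl hx⟩ ⟨v, hvK⟩ := hK
        exact hK'.reachable
      · have hbU : (b : V) ∈ U := hcl _ hx _ hadj hbv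
        have hK : K.Adj (a : V) (b : V) := ⟨Or.inl hx, Or.inl hbU, hadj⟩
        have hK' : K.coe.Adj ⟨(a : V), Or.inl hx⟩ ⟨(b : V), Or.inl hbU⟩ := hK
        exact hK'.reachable.trans (ih hcv hbU)
  rw [SimpleGraph.Subgraph.connected_iff', SimpleGraph.connected_iff_exists_forall_reachable]
  refine ⟨⟨v, hvK⟩, ?_⟩
  rintro ⟨w, (hwU | rfl)⟩
  · obtain ⟨p⟩ := hH ⟨w, hUsub hwU⟩ ⟨v, hv⟩
    exact (key _ _ p rfl hwU).symm
  · exact SimpleGraph.Reachable.refl _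

/-- a minimal densest subgraph has no cut vertex. -/
theorem minimalDensest_no_cut_vertex [Fintype V] (G : SimpleGraph V) (hG : G.Connected)
    (H : G.Subgraph) (hmin : IsMinimalDensest G H) (hne : H.edgeSet.Nonempty)
    (v : V) (hv : v ∈ H.verts) :
    (H.deleteVerts {v}).Connected := by
  classical
  by_contra hd
  obtain ⟨hHconn, hHdens⟩ := hmin.1
  -- H has an edge, hence a vertex different from v
  obtain ⟨x0, y0, hxy0⟩ : ∃ x y, H.Adj x y := by
    obtain ⟨e, he⟩ := hne
    induction e using Sym2.ind with
    | _ x y => exact ⟨x, y, SimpleGraph.Subgraph.mem_edgeSet.mp he⟩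
  set H' := H.deleteVerts {v} with hH'def
  have hH'verts : H'.verts = H.verts \ {v} := by
    simp [hH'def]
  have hH'ne : H'.verts.Nonempty := by
    rcases eq_or_ne x0 v with rfl | hx0
    · refine ⟨y0, ?_⟩
      rw [hH'verts]
      exact ⟨H.edge_vert hxy0.symm, (G.ne_of_adj (H.adj_sub hxy0)).symm⟩
    · refine ⟨x0, ?_⟩
      rw [hH'verts]
      exact ⟨H.edge_vert hxy0, hx0⟩
  -- H' is not preconnected
  have hnp : ¬ H'.coe.Preconnected := by
    intro hp
    haveI : Nonempty ↥H'.verts := Set.nonempty_coe_sort.mpr hH'ne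
    exact hd ⟨SimpleGraph.Connected.mk hp⟩
  rw [SimpleGraph.Preconnected] at hnp
  push_neg at hnp
  obtain ⟨a, b, hab⟩ := hnp
  -- The side of a, and the other side
  set S : Set V := {x | ∃ h : x ∈ H'.verts, H'.coe.Reachable a ⟨x, h⟩} with hSdef
  set T : Set V := H'.verts \ S with hTdef
  have hSsub : S ⊆ H'.verts := fun x hx => hx.1
  have hTsub : T ⊆ H'.verts := fun x hx => hx.1
  have haS : (a : V) ∈ S := ⟨a.2, by exact SimpleGraph.Reachable.refl _⟩
  have hbT : (b : V) ∈ T := by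
    refine ⟨b.2, fun hbS => hab ?_⟩
    exact hbS.2
  have hvS : v ∉ S := fun h => (hH'verts ▸ hSsub h).2 rfl
  have hvT : v ∉ T := fun h => (hH'verts ▸ hTsub h).2 rfl
  have hST : Disjoint S T := Set.disjoint_sdiff_right
  have hSTunion : S ∪ T = H'.verts := by
    rw [hTdef, Set.union_diff_self, Set.union_eq_self_of_subset_left hSsub]
  -- closure properties
  have hmemH' : ∀ x y, H.Adj x y → x ≠ v → y ≠ v → H'.Adj x y := by
    intro x y hxy hx hy
    simp only [hH'def, SimpleGraph.Subgraph.deleteVerts_adj, Set.mem_singleton_iff]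
    exact ⟨H.edge_vert hxy, hx, H.edge_vert hxy.symm, hy, hxy⟩
  have hclS : ∀ x ∈ S, ∀ y, H.Adj x y → y ≠ v → y ∈ S := by
    intro x hxS y hxy hyv
    have hxv : x ≠ v := fun h => hvS (h ▸ hxS)
    have hadj' : H'.Adj x y := hmemH' x y hxy hxv hyv
    have hy' : y ∈ H'.verts := H'.edge_vert hadj'.symm
    have hadj'' : H'.coe.Adj ⟨x, hxS.1⟩ ⟨y, hy'⟩ := hadj'
    exact ⟨hy', hxS.2.trans hadj''.reachable⟩
  have hclT : ∀ x ∈ T, ∀ y, H.Adj x y → y ≠ v → y ∈ T := by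
    intro x hxT y hxy hyv
    have hxv : x ≠ v := fun h => hvT (h ▸ hxT)
    have hadj' : H'.Adj x y := hmemH' x y hxy hxv hyv
    have hy' : y ∈ H'.verts := H'.edge_vert hadj'.symm
    refine ⟨hy', fun hyS => hxT.2 ?_⟩
    exact hclS y hyS x hxy.symm hxv
  -- the two pieces
  set H1 := H.induce (S ∪ {v}) with hH1def
  set H2 := H.induce (T ∪ {v}) with hH2def
  have hSsubH : S ⊆ H.verts := fun x hx => (hH'verts ▸ hSsub hx).1
  have hTsubH : T ⊆ H.verts := fun x hx => (hH'verts ▸ hTsub hx).1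
  have h1conn : H1.Connected := induce_union_singleton_connected H hHconn hv hSsubH hvS hclS
  have h2conn : H2.Connected := induce_union_singleton_connected H hHconn hv hTsubH hvT hclT
  have h1le : H1 ≤ H := by
    rw [hH1def]
    exact (SimpleGraph.Subgraph.induce_mono_right (by
      rintro x (hx | rfl)
      · exact hSsubH hx
      · exact hv)).trans_eq H.induce_self_verts
  have h2le : H2 ≤ H := by
    rw [hH2def]
    exact (SimpleGraph.Subgraph.induce_mono_right (by
      rintro x (hx | rfl)
      · exact hTsubH hx
      · exact hv)).trans_eq H.induce_self_verts
  have h1lt : H1 < H := by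
    refine lt_of_le_of_ne h1le fun hEq => ?_
    have : (b : V) ∈ H1.verts := hEq ▸ hTsubH hbT
    rcases this with h | h
    · exact hbT.2 h
    · exact hvT (h ▸ hbT)
  have h2lt : H2 < H := by
    refine lt_of_le_of_ne h2le fun hEq => ?_
    have : (a : V) ∈ H2.verts := hEq ▸ hSsubH haS
    rcases this with h | h
    · exact (hST.ne_of_mem haS h) rfl
    · exact hvS (h ▸ haS)
  -- edge partition
  have hE : H.edgeSet = H1.edgeSet ∪ H2.edgeSet := by
    ext e
    induction e using Sym2.ind with
    | _ x y =>
      simp only [Set.mem_union, SimpleGraph.Subgraph.mem_edgeSet]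
      constructor
      · intro hxy
        rcases eq_or_ne x v with hxv | hxv
        · have hyv : y ≠ v := fun h => (G.ne_of_adj (H.adj_sub hxy)) (hxv.trans h.symm)
          have hy' : y ∈ H'.verts := by
            rw [hH'verts]; exact ⟨H.edge_vert hxy.symm, hyv⟩
          rw [← hSTunion] at hy'
          rcases hy' with h | h
          · exact Or.inl ⟨Or.inr hxv, Or.inl h, hxy⟩
          · exact Or.inr ⟨Or.inr hxv, Or.inl h, hxy⟩
        · rcases eq_or_ne y v with hyv | hyv
          · have hx' : x ∈ H'.verts := by
              rw [hH'verts]; exact ⟨H.edge_vert hxy, hxv⟩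
            rw [← hSTunion] at hx'
            rcases hx' with h | h
            · exact Or.inl ⟨Or.inl h, Or.inr hyv, hxy⟩
            · exact Or.inr ⟨Or.inl h, Or.inr hyv, hxy⟩
          · have hx' : x ∈ H'.verts := by
              rw [hH'verts]; exact ⟨H.edge_vert hxy, hxv⟩
            rw [← hSTunion] at hx'
            rcases hx' with h | h
            · exact Or.inl ⟨Or.inl h, Or.inl (hclS x h y hxy hyv), hxy⟩
            · exact Or.inr ⟨Or.inl h, Or.inl (hclT x h y hxy hyv), hxy⟩
      · rintro (h | h)
        · exact h.2.2
        · exact h.2.2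
  have hEdisj : Disjoint H1.edgeSet H2.edgeSet := by
    rw [Set.disjoint_left]
    intro e he1 he2
    induction e using Sym2.ind with
    | _ x y =>
      rw [SimpleGraph.Subgraph.mem_edgeSet] at he1 he2
      have hxv : x = v := by
        rcases he1.1 with h | h
        · rcases he2.1 with h' | h'
          · exact absurd rfl (hST.ne_of_mem h h')
          · exact h'
        · exact h
      have hyv : y = v := by
        rcases he1.2.1 with h | h
        · rcases he2.2.1 with h' | h'
          · exact absurd rfl (hST.ne_of_mem h h')
          · exact h'
        · exact h
      exact G.ne_of_adj (H.adj_sub he1.2.2) (hxv.trans hyv.symm)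
  -- cardinalities
  have hSfin : S.Finite := Set.toFinite S
  have hTfin : T.Finite := Set.toFinite T
  have hSne : S.Nonempty := ⟨(a : V), haS⟩
  have hTne : T.Nonempty := ⟨(b : V), hbT⟩
  have hn1 : H1.verts.ncard = S.ncard + 1 := by
    rw [hH1def, SimpleGraph.Subgraph.induce_verts,
      Set.ncard_union_eq (Set.disjoint_singleton_right.mpr hvS) hSfin (Set.finite_singleton v),
      Set.ncard_singleton]
  have hn2 : H2.verts.ncard = T.ncard + 1 := by
    rw [hH2def, SimpleGraph.Subgraph.induce_verts,
      Set.ncard_union_eq (Set.disjoint_singleton_right.mpr hvT) hTfin (Set.finite_singleton v),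
      Set.ncard_singleton]
  have hHverts : H.verts = (S ∪ T) ∪ {v} := by
    rw [hSTunion, hH'verts, Set.diff_union_self,
      Set.union_eq_self_of_subset_right (Set.singleton_subset_iff.mpr hv)]
  have hvST : v ∉ S ∪ T := fun h => h.elim hvS hvT
  have hn : H.verts.ncard = S.ncard + T.ncard + 1 := by
    rw [hHverts,
      Set.ncard_union_eq (Set.disjoint_singleton_right.mpr hvST) (Set.toFinite _)
        (Set.finite_singleton v),
      Set.ncard_union_eq hST hSfin hTfin, Set.ncard_singleton]
  have hm : H.edgeSet.ncard = H1.edgeSet.ncard + H2.edgeSet.ncard := by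
    rw [hE, Set.ncard_union_eq hEdisj (Set.toFinite _) (Set.toFinite _)]
  -- densities
  have hs0 : (0:ℝ) < (S.ncard : ℝ) := by
    exact_mod_cast (Set.ncard_pos hSfin).mpr hSne
  have ht0 : (0:ℝ) < (T.ncard : ℝ) := by
    exact_mod_cast (Set.ncard_pos hTfin).mpr hTne
  have hd1 : density G H1 = (H1.edgeSet.ncard : ℝ) / (S.ncard : ℝ) := by
    unfold density
    rw [hn1]
    push_cast
    ring_nf
  have hd2 : density G H2 = (H2.edgeSet.ncard : ℝ) / (T.ncard : ℝ) := by
    unfold density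
    rw [hn2]
    push_cast
    ring_nf
  have hdH : density G H =
      ((H1.edgeSet.ncard : ℝ) + (H2.edgeSet.ncard : ℝ)) / ((S.ncard : ℝ) + (T.ncard : ℝ)) := by
    unfold density
    rw [hm, hn]
    push_cast
    ring_nf
  have hmax : fracArboricity G ≤ max (density G H1) (density G H2) := by
    rw [← hHdens, hdH, hd1, hd2]
    exact mediant_le_max hs0 ht0
  rcases le_max_iff.mp hmax with hle | hle
  · exact hmin.2 H1 h1lt ⟨h1conn, le_antisymm (density_le_fracArboricity G H1 h1conn) hle⟩
  · exact hmin.2 H2 h2lt ⟨h2conn, le_antisymm (density_le_fracArboricity G H2 h2conn) hle⟩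
end

section
/- Noncrossing property of minimal densest subgraphs: if H is a minimal densest subgraph of G and K is any densest subgraph of G, then either E(H) ⊆ E(K) or E(H) ∩ E(K) = ∅. -/
open scoped BigOperators

variable {V : Type*}

section Aux

open SimpleGraph

/-- The set of vertices reachable from a base vertex inside a subgraph. -/
def MD_reachSet {G : SimpleGraph V} (L : G.Subgraph) (v : L.verts) : Set V :=
  {w | ∃ hw : w ∈ L.verts, L.coe.Reachable v ⟨w, hw⟩}

lemma MD_reachSet_subset {G : SimpleGraph V} (L : G.Subgraph) (v : L.verts) :
    MD_reachSet L v ⊆ L.verts := fun _ hw => hw.1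

lemma MD_base_mem_reachSet {G : SimpleGraph V} (L : G.Subgraph) (v : L.verts) :
    (v : V) ∈ MD_reachSet L v := ⟨v.2, Reachable.refl _⟩

lemma MD_reachSet_adj {G : SimpleGraph V} {L : G.Subgraph} {v : L.verts} {x y : V}
    (hx : x ∈ MD_reachSet L v) (hxy : L.Adj x y) : y ∈ MD_reachSet L v := by
  obtain ⟨hx', r⟩ := hx
  refine ⟨hxy.snd_mem, r.trans (SimpleGraph.Adj.reachable ?_)⟩
  simp only [Subgraph.coe_adj]
  exact hxy

lemma MD_induce_reachSet_connected {G : SimpleGraph V} (L : G.Subgraph) (v : L.verts) :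
    (L.induce (MD_reachSet L v)).Connected := by
  set S := MD_reachSet L v with hS
  rw [Subgraph.connected_iff', connected_iff_exists_forall_reachable]
  have key : ∀ {a b : L.verts} (_ : L.coe.Walk a b) (ha : (a : V) ∈ S),
      ∃ hb : (b : V) ∈ S, (L.induce S).coe.Reachable ⟨a, ha⟩ ⟨b, hb⟩ := by
    intro a b p
    induction p with
    | nil => exact fun ha => ⟨ha, Reachable.refl _⟩
    | @cons x y z h q ih =>
      intro hx
      have hLxy : L.Adj (x : V) (y : V) := by simpa using h
      have hy : (y : V) ∈ S := MD_reachSet_adj hx hLxy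
      obtain ⟨hb, r2⟩ := ih hy
      have hadj : (L.induce S).coe.Adj ⟨(x : V), hx⟩ ⟨(y : V), hy⟩ := by
        simp only [Subgraph.coe_adj, Subgraph.induce_adj]
        exact ⟨hx, hy, hLxy⟩
      exact ⟨hb, hadj.reachable.trans r2⟩
  refine ⟨⟨(v : V), MD_base_mem_reachSet L v⟩, ?_⟩
  rintro ⟨w, hw⟩
  have hw' : w ∈ S := hw
  obtain ⟨hw1, r⟩ := hw'
  obtain ⟨p⟩ := r
  obtain ⟨hb, r'⟩ := key p (MD_base_mem_reachSet L v)
  exact r'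

/-- Splitting a disconnected nonempty subgraph into two vertex- and edge-disjoint pieces,
the first of which is connected. -/
lemma MD_exists_split {G : SimpleGraph V} (L : G.Subgraph) (hne : L.verts.Nonempty)
    (hnc : ¬ L.Connected) :
    ∃ L1 L2 : G.Subgraph, L1.Connected ∧ L2.verts.Nonempty ∧
      L1.verts ∪ L2.verts = L.verts ∧ Disjoint L1.verts L2.verts ∧
      L1.edgeSet ∪ L2.edgeSet = L.edgeSet ∧ Disjoint L1.edgeSet L2.edgeSet := by
  have hnp : ¬ L.Preconnected := by
    intro h
    exact hnc (Subgraph.connected_iff.mpr ⟨h, hne⟩)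
  rw [Subgraph.preconnected_iff] at hnp
  simp only [SimpleGraph.Preconnected, not_forall] at hnp
  obtain ⟨a, b, hab⟩ := hnp
  set S := MD_reachSet L a with hSdef
  have hSsub : S ⊆ L.verts := MD_reachSet_subset L a
  have hbS : (b : V) ∉ S := by
    rintro ⟨hb, r⟩
    exact hab r
  refine ⟨L.induce S, L.induce (L.verts \ S), MD_induce_reachSet_connected L a,
    ⟨(b : V), ⟨b.2, hbS⟩⟩, ?_, ?_, ?_, ?_⟩
  · simpa using Set.union_diff_cancel hSsub
  · simpa using Set.disjoint_sdiff_right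
  · ext e
    induction e using Sym2.ind with
    | _ x y =>
      simp only [Set.mem_union, Subgraph.mem_edgeSet, Subgraph.induce_adj, Set.mem_diff]
      constructor
      · rintro (⟨_, _, h⟩ | ⟨_, _, h⟩) <;> exact h
      · intro h
        by_cases hx : x ∈ S
        · exact Or.inl ⟨hx, MD_reachSet_adj hx h, h⟩
        · refine Or.inr ⟨⟨h.fst_mem, hx⟩, ⟨h.snd_mem, fun hy => hx ?_⟩, h⟩
          exact MD_reachSet_adj hy h.symm
  · rw [Set.disjoint_left]
    intro e he1 he2
    induction e using Sym2.ind with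
    | _ x y =>
      rw [Subgraph.mem_edgeSet, Subgraph.induce_adj] at he1 he2
      exact he2.1.2 he1.1

/-- The key counting bound: any nonempty subgraph has at most `g (n-1)` edges, and a
disconnected one at most `g (n-2)`. -/
lemma MD_key_bound [Fintype V] {G : SimpleGraph V} {g : ℝ} (hg0 : 0 ≤ g)
    (hcon : ∀ L : G.Subgraph, L.Connected →
      (L.edgeSet.ncard : ℝ) ≤ g * ((L.verts.ncard : ℝ) - 1)) :
    ∀ n : ℕ, ∀ L : G.Subgraph, L.verts.ncard ≤ n → L.verts.Nonempty →
      ((L.edgeSet.ncard : ℝ) ≤ g * ((L.verts.ncard : ℝ) - 1) ∧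
       (¬ L.Connected → (L.edgeSet.ncard : ℝ) ≤ g * ((L.verts.ncard : ℝ) - 2))) := by
  intro n
  induction n with
  | zero =>
    intro L hL hne
    have := (Set.ncard_pos L.verts.toFinite).mpr hne
    omega
  | succ n ih =>
    intro L hL hne
    by_cases hc : L.Connected
    · refine ⟨hcon L hc, fun h => absurd hc h⟩
    · obtain ⟨L1, L2, hc1, hne2, hvu, hvd, heu, hed⟩ := MD_exists_split L hne hc
      have hne1 := hc1.nonempty
      have hv : L.verts.ncard = L1.verts.ncard + L2.verts.ncard := by
        rw [← hvu, Set.ncard_union_eq hvd L1.verts.toFinite L2.verts.toFinite]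
      have he : L.edgeSet.ncard = L1.edgeSet.ncard + L2.edgeSet.ncard := by
        rw [← heu, Set.ncard_union_eq hed L1.edgeSet.toFinite L2.edgeSet.toFinite]
      have h1pos : 0 < L1.verts.ncard := (Set.ncard_pos L1.verts.toFinite).mpr hne1
      have h2pos : 0 < L2.verts.ncard := (Set.ncard_pos L2.verts.toFinite).mpr hne2
      have hL2 : L2.verts.ncard ≤ n := by omega
      have b1 : (L1.edgeSet.ncard : ℝ) ≤ g * ((L1.verts.ncard : ℝ) - 1) := hcon L1 hc1
      have b2 : (L2.edgeSet.ncard : ℝ) ≤ g * ((L2.verts.ncard : ℝ) - 1) :=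
        (ih L2 hL2 hne2).1
      have hsum := add_le_add b1 b2
      have hkey : (L.edgeSet.ncard : ℝ) ≤ g * ((L.verts.ncard : ℝ) - 2) := by
        have e1 : g * ((L1.verts.ncard : ℝ) - 1) + g * ((L2.verts.ncard : ℝ) - 1)
            = g * (((L1.verts.ncard : ℝ) + (L2.verts.ncard : ℝ)) - 2) := by ring
        rw [he, hv]
        push_cast
        linarith [hsum, e1]
      refine ⟨?_, fun _ => hkey⟩
      have : g * ((L.verts.ncard : ℝ) - 2) ≤ g * ((L.verts.ncard : ℝ) - 1) := by
        apply mul_le_mul_of_nonneg_left (by linarith) hg0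
      linarith

lemma MD_bddAbove [Fintype V] (G : SimpleGraph V) :
    BddAbove {d : ℝ | ∃ H : G.Subgraph, H.Connected ∧ d = density G H} := by
  refine ⟨(Fintype.card (Sym2 V) : ℝ), ?_⟩
  rintro d ⟨L, hL, rfl⟩
  have hm : (L.edgeSet.ncard : ℝ) ≤ (Fintype.card (Sym2 V) : ℝ) := by
    have : L.edgeSet.ncard ≤ (Set.univ : Set (Sym2 V)).ncard :=
      Set.ncard_le_ncard (Set.subset_univ _) Set.finite_univ
    rw [Set.ncard_univ, Nat.card_eq_fintype_card] at this
    exact_mod_cast this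
  have hn : 0 < L.verts.ncard := (Set.ncard_pos L.verts.toFinite).mpr hL.nonempty
  unfold density
  rcases eq_or_lt_of_le (Nat.succ_le_of_lt hn) with h1 | h2
  · rw [← h1]
    norm_num
  · have : (1 : ℝ) ≤ (L.verts.ncard : ℝ) - 1 := by
      have : (2 : ℕ) ≤ L.verts.ncard := h2
      have := (Nat.cast_le (α := ℝ)).mpr this
      push_cast at this
      linarith
    calc (L.edgeSet.ncard : ℝ) / ((L.verts.ncard : ℝ) - 1)
        ≤ (L.edgeSet.ncard : ℝ) := div_le_self (by positivity) this
      _ ≤ _ := hm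

lemma MD_density_le [Fintype V] (G : SimpleGraph V) (L : G.Subgraph) (hL : L.Connected) :
    density G L ≤ fracArboricity G :=
  le_csSup (MD_bddAbove G) ⟨L, hL, rfl⟩

lemma MD_two_le_ncard {s : Set V} (hs : s.Finite) {x y : V} (hx : x ∈ s) (hy : y ∈ s)
    (hne : x ≠ y) : 2 ≤ s.ncard := by
  have : ({x, y} : Set V) ⊆ s := by
    rintro z (rfl | rfl)
    · exact hx
    · simpa using hy
  calc 2 = ({x, y} : Set V).ncard := (Set.ncard_pair hne).symm
    _ ≤ s.ncard := Set.ncard_le_ncard this hs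

end Aux

/-- noncrossing property of minimal densest subgraphs. -/
theorem minimalDensest_noncrossing [Fintype V] (G : SimpleGraph V) (hG : G.Connected)
    (H K : G.Subgraph) (hH : IsMinimalDensest G H) (hK : IsDensest G K) :
    H.edgeSet ⊆ K.edgeSet ∨ H.edgeSet ∩ K.edgeSet = ∅ := by
  by_cases hint : H.edgeSet ∩ K.edgeSet = ∅
  · exact Or.inr hint
  left
  obtain ⟨x, y, hxyH, hxyK⟩ : ∃ x y, H.Adj x y ∧ K.Adj x y := by
    obtain ⟨e, he⟩ := Set.nonempty_iff_ne_empty.mpr hint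
    induction e using Sym2.ind with
    | _ x y => exact ⟨x, y, he.1, he.2⟩
  have hxy_ne : x ≠ y := hxyH.ne
  set g := fracArboricity G with hgdef
  -- g ≥ 1
  have hGadj : G.Adj x y := hxyH.adj_sub
  have hone : density G (G.subgraphOfAdj hGadj) = 1 := by
    unfold density
    rw [SimpleGraph.subgraphOfAdj_verts, SimpleGraph.edgeSet_subgraphOfAdj,
      Set.ncard_singleton, Set.ncard_pair hxy_ne]
    norm_num
  have hg1 : (1 : ℝ) ≤ g := by
    have := MD_density_le G (G.subgraphOfAdj hGadj)
      (SimpleGraph.Subgraph.subgraphOfAdj_connected hGadj)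
    rw [hone] at this
    exact this
  have hg0 : (0 : ℝ) ≤ g := by linarith
  -- for every connected subgraph, m ≤ g (n - 1)
  have hcon : ∀ L : G.Subgraph, L.Connected →
      (L.edgeSet.ncard : ℝ) ≤ g * ((L.verts.ncard : ℝ) - 1) := by
    intro L hL
    have hd := MD_density_le G L hL
    have hn : 0 < L.verts.ncard := (Set.ncard_pos L.verts.toFinite).mpr hL.nonempty
    rcases eq_or_lt_of_le (Nat.succ_le_of_lt hn) with h1 | h2
    · -- single vertex: no edges
      have hempty : L.edgeSet = ∅ := by
        by_contra hne
        obtain ⟨e, he⟩ := Set.nonempty_iff_ne_empty.mpr hne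
        induction e using Sym2.ind with
        | _ u v =>
          have := MD_two_le_ncard L.verts.toFinite he.fst_mem he.snd_mem he.ne
          omega
      rw [hempty, ← h1]
      simp
    · have hpos : (0 : ℝ) < (L.verts.ncard : ℝ) - 1 := by
        have : (2 : ℕ) ≤ L.verts.ncard := h2
        have := (Nat.cast_le (α := ℝ)).mpr this
        push_cast at this
        linarith
      rw [density, div_le_iff₀ hpos] at hd
      linarith [hd]
  -- exact values for H and K
  have hHn2 : (2 : ℝ) ≤ (H.verts.ncard : ℝ) := by
    exact_mod_cast MD_two_le_ncard H.verts.toFinite hxyH.fst_mem hxyH.snd_mem hxy_ne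
  have hKn2 : (2 : ℝ) ≤ (K.verts.ncard : ℝ) := by
    exact_mod_cast MD_two_le_ncard K.verts.toFinite hxyK.fst_mem hxyK.snd_mem hxy_ne
  have hHeq : (H.edgeSet.ncard : ℝ) = g * ((H.verts.ncard : ℝ) - 1) := by
    have := hH.1.2
    rw [density, div_eq_iff (by linarith : ((H.verts.ncard : ℝ) - 1) ≠ 0)] at this
    exact this
  have hKeq : (K.edgeSet.ncard : ℝ) = g * ((K.verts.ncard : ℝ) - 1) := by
    have := hK.2
    rw [density, div_eq_iff (by linarith : ((K.verts.ncard : ℝ) - 1) ≠ 0)] at this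
    exact this
  -- the intersection and the union
  set I := H ⊓ K with hIdef
  set U := H ⊔ K with hUdef
  have hxI : x ∈ I.verts := ⟨hxyH.fst_mem, hxyK.fst_mem⟩
  have hyI : y ∈ I.verts := ⟨hxyH.snd_mem, hxyK.snd_mem⟩
  have hIne : I.verts.Nonempty := ⟨x, hxI⟩
  have hUconn : U.Connected := SimpleGraph.Subgraph.connected_sup hH.1.1.preconnected hK.1.preconnected hIne
  have hIn2 : (2 : ℝ) ≤ (I.verts.ncard : ℝ) := by
    exact_mod_cast MD_two_le_ncard I.verts.toFinite hxI hyI hxy_ne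
  -- counting identities
  have hvsum : (U.verts.ncard : ℝ) + (I.verts.ncard : ℝ)
      = (H.verts.ncard : ℝ) + (K.verts.ncard : ℝ) := by
    have := Set.ncard_union_add_ncard_inter H.verts K.verts H.verts.toFinite K.verts.toFinite
    have h2 : U.verts = H.verts ∪ K.verts := SimpleGraph.Subgraph.verts_sup H K
    have h3 : I.verts = H.verts ∩ K.verts := SimpleGraph.Subgraph.verts_inf H K
    rw [h2, h3]
    exact_mod_cast this
  have hesum : (U.edgeSet.ncard : ℝ) + (I.edgeSet.ncard : ℝ)
      = (H.edgeSet.ncard : ℝ) + (K.edgeSet.ncard : ℝ) := by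
    have := Set.ncard_union_add_ncard_inter H.edgeSet K.edgeSet
      H.edgeSet.toFinite K.edgeSet.toFinite
    have h2 : U.edgeSet = H.edgeSet ∪ K.edgeSet := SimpleGraph.Subgraph.edgeSet_sup
    have h3 : I.edgeSet = H.edgeSet ∩ K.edgeSet := SimpleGraph.Subgraph.edgeSet_inf
    rw [h2, h3]
    exact_mod_cast this
  have hU_le : (U.edgeSet.ncard : ℝ) ≤ g * ((U.verts.ncard : ℝ) - 1) := hcon U hUconn
  have hI_ge : g * ((I.verts.ncard : ℝ) - 1) ≤ (I.edgeSet.ncard : ℝ) := by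
    have e1 : g * ((H.verts.ncard : ℝ) - 1) + g * ((K.verts.ncard : ℝ) - 1)
        - g * ((U.verts.ncard : ℝ) - 1) = g * ((I.verts.ncard : ℝ) - 1) := by
      have : (U.verts.ncard : ℝ) = (H.verts.ncard : ℝ) + (K.verts.ncard : ℝ)
          - (I.verts.ncard : ℝ) := by linarith
      rw [this]; ring
    linarith
  have hI_conn : I.Connected := by
    by_contra hnc
    have := (MD_key_bound hg0 hcon I.verts.ncard I le_rfl hIne).2 hnc
    have hg_pos : (0 : ℝ) < g := by linarith
    nlinarith
  have hI_le : (I.edgeSet.ncard : ℝ) ≤ g * ((I.verts.ncard : ℝ) - 1) := hcon I hI_conn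
  have hI_eq : (I.edgeSet.ncard : ℝ) = g * ((I.verts.ncard : ℝ) - 1) :=
    le_antisymm hI_le hI_ge
  have hI_dens : density G I = g := by
    rw [density, hI_eq]
    exact mul_div_cancel_right₀ g (by linarith : ((I.verts.ncard : ℝ) - 1) ≠ 0)
  have hIH : I ≤ H := inf_le_left
  rcases eq_or_lt_of_le hIH with heq | hlt
  · have hHK : H ≤ K := by
      rw [← heq] at hIdef ⊢
      exact inf_le_right
    exact SimpleGraph.Subgraph.edgeSet_mono hHK
  · exact absurd ⟨hI_conn, hI_dens⟩ (hH.2 I hlt)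
end

section
/- Any two distinct minimal densest subgraphs of a graph G share at most one common vertex. -/
open scoped BigOperators

variable {V : Type*}

section Aux

open SimpleGraph

variable [Fintype V] {G : SimpleGraph V}

lemma aux_edgeSet_empty (H : G.Subgraph) (h : H.verts.ncard ≤ 1) : H.edgeSet = ∅ := by
  ext e
  induction e using Sym2.ind with
  | _ a b =>
    simp only [Subgraph.mem_edgeSet, Set.mem_empty_iff_false, iff_false]
    intro hab
    have hane : a ≠ b := hab.ne
    have hsub : ({a, b} : Set V) ⊆ H.verts := by
      rintro x (rfl | rfl)
      · exact H.edge_vert hab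
      · exact H.edge_vert hab.symm
    have := Set.ncard_le_ncard hsub (Set.toFinite _)
    rw [Set.ncard_pair hane] at this
    omega

lemma aux_bddAbove (G : SimpleGraph V) :
    BddAbove {d : ℝ | ∃ H : G.Subgraph, H.Connected ∧ d = density G H} := by
  refine ⟨(Fintype.card (Sym2 V) : ℝ), ?_⟩
  rintro d ⟨H, hH, rfl⟩
  have hm : (H.edgeSet.ncard : ℝ) ≤ (Fintype.card (Sym2 V) : ℝ) := by
    have := Set.ncard_le_ncard (Set.subset_univ H.edgeSet) (Set.toFinite _)
    rw [Set.ncard_univ, Nat.card_eq_fintype_card] at this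
    exact_mod_cast this
  rcases le_or_gt H.verts.ncard 1 with hn | hn
  · rw [density, aux_edgeSet_empty H hn]
    simp
  · have h2 : (2 : ℝ) ≤ (H.verts.ncard : ℝ) := by exact_mod_cast hn
    have hden : (1 : ℝ) ≤ (H.verts.ncard : ℝ) - 1 := by linarith
    calc density G H ≤ (H.edgeSet.ncard : ℝ) := by
          rw [density]
          exact div_le_self (by positivity) hden
      _ ≤ _ := hm

lemma aux_density_le (H : G.Subgraph) (hH : H.Connected) :
    density G H ≤ fracArboricity G :=
  le_csSup (aux_bddAbove G) ⟨H, hH, rfl⟩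

lemma aux_mul_bound (H : G.Subgraph) (hH : H.Connected) :
    (H.edgeSet.ncard : ℝ) ≤ fracArboricity G * ((H.verts.ncard : ℝ) - 1) := by
  have hpos : 0 < H.verts.ncard := by
    rw [Set.ncard_pos (Set.toFinite _)]
    exact hH.nonempty
  rcases le_or_gt H.verts.ncard 1 with hn | hn
  · have h1 : H.verts.ncard = 1 := le_antisymm hn hpos
    rw [aux_edgeSet_empty H hn, h1]
    simp
  · have h2 : (2 : ℝ) ≤ (H.verts.ncard : ℝ) := by exact_mod_cast hn
    have hden : (0 : ℝ) < (H.verts.ncard : ℝ) - 1 := by linarith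
    have := aux_density_le H hH
    rw [density, div_le_iff₀ hden] at this
    linarith [this]

lemma aux_split (K : G.Subgraph) (hne : K.verts.Nonempty) (hdisc : ¬ K.Connected) :
    ∃ K1 K2 : G.Subgraph, K1.verts.Nonempty ∧ K2.verts.Nonempty ∧
      K1.verts.ncard < K.verts.ncard ∧ K2.verts.ncard < K.verts.ncard ∧
      K1.verts.ncard + K2.verts.ncard = K.verts.ncard ∧
      K1.edgeSet.ncard + K2.edgeSet.ncard = K.edgeSet.ncard := by
  obtain ⟨v, hv⟩ := hne
  set S : Set V := {u | ∃ (hu : u ∈ K.verts), K.coe.Reachable ⟨u, hu⟩ ⟨v, hv⟩} with hSdef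
  have hSsub : S ⊆ K.verts := fun u hu => hu.1
  have hvS : v ∈ S := ⟨hv, SimpleGraph.Reachable.refl _⟩
  have hw : ∃ w ∈ K.verts, w ∉ S := by
    by_contra hcon
    push_neg at hcon
    apply hdisc
    rw [Subgraph.connected_iff]
    refine ⟨⟨fun x y => ?_⟩, ⟨v, hv⟩⟩
    obtain ⟨hx, hrx⟩ := hcon x.1 x.2
    obtain ⟨hy, hry⟩ := hcon y.1 y.2
    have hx' : (⟨x.1, hx⟩ : K.verts) = x := Subtype.ext rfl
    have hy' : (⟨y.1, hy⟩ : K.verts) = y := Subtype.ext rfl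
    rw [hx'] at hrx
    rw [hy'] at hry
    exact hrx.trans hry.symm
  obtain ⟨w, hwK, hwS⟩ := hw
  have hstep : ∀ a b, K.Adj a b → a ∈ S → b ∈ S := by
    rintro a b hab ⟨ha, hr⟩
    have hb : b ∈ K.verts := K.edge_vert hab.symm
    refine ⟨hb, ?_⟩
    have hadj : K.coe.Adj ⟨b, hb⟩ ⟨a, ha⟩ := hab.symm.coe
    exact hadj.reachable.trans hr
  refine ⟨K.induce S, K.induce (K.verts \ S), ⟨v, hvS⟩, ⟨w, hwK, hwS⟩, ?_, ?_, ?_, ?_⟩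
  · simp only [Subgraph.induce_verts]
    refine Set.ncard_lt_ncard ?_ (Set.toFinite _)
    exact hSsub.ssubset_of_ne (fun h => hwS (h ▸ hwK))
  · simp only [Subgraph.induce_verts]
    refine Set.ncard_lt_ncard ?_ (Set.toFinite _)
    refine Set.diff_subset.ssubset_of_ne (fun h => ?_)
    have : v ∈ K.verts \ S := by rw [h]; exact hv
    exact this.2 hvS
  · simp only [Subgraph.induce_verts]
    rw [add_comm]
    exact Set.ncard_diff_add_ncard_of_subset hSsub (Set.toFinite _)
  · have hedge : K.edgeSet = (K.induce S).edgeSet ∪ (K.induce (K.verts \ S)).edgeSet := by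
      ext e
      induction e using Sym2.ind with
      | _ a b =>
        simp only [Set.mem_union, Subgraph.mem_edgeSet, Subgraph.induce_adj]
        constructor
        · intro hab
          by_cases ha : a ∈ S
          · exact Or.inl ⟨ha, hstep a b hab ha, hab⟩
          · exact Or.inr ⟨⟨K.edge_vert hab, ha⟩,
              ⟨K.edge_vert hab.symm, fun hb => ha (hstep b a hab.symm hb)⟩, hab⟩
        · rintro (⟨_, _, h⟩ | ⟨_, _, h⟩) <;> exact h
    have hdisj : Disjoint (K.induce S).edgeSet (K.induce (K.verts \ S)).edgeSet := by
      rw [Set.disjoint_left]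
      intro e h1 h2
      induction e using Sym2.ind with
      | _ a b =>
        rw [Subgraph.mem_edgeSet, Subgraph.induce_adj] at h1 h2
        exact h2.1.2 h1.1
    rw [hedge, Set.ncard_union_eq hdisj (Set.toFinite _) (Set.toFinite _)]

lemma aux_edge_card_bound (hg0 : 0 ≤ fracArboricity G) :
    ∀ (n : ℕ) (K : G.Subgraph), K.verts.ncard ≤ n → K.verts.Nonempty →
      (K.edgeSet.ncard : ℝ) ≤ fracArboricity G * ((K.verts.ncard : ℝ) - 1) := by
  intro n
  induction n with
  | zero =>
    intro K hc hne
    exfalso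
    rw [Nat.le_zero, Set.ncard_eq_zero (Set.toFinite _)] at hc
    exact hne.ne_empty hc
  | succ n ih =>
    intro K hcard hne
    by_cases hc : K.Connected
    · exact aux_mul_bound K hc
    · obtain ⟨K1, K2, h1ne, h2ne, h1lt, h2lt, hv, he⟩ := aux_split K hne hc
      have b1 := ih K1 (by omega) h1ne
      have b2 := ih K2 (by omega) h2ne
      have hvR : (K1.verts.ncard : ℝ) + (K2.verts.ncard : ℝ) = (K.verts.ncard : ℝ) := by
        exact_mod_cast congrArg (Nat.cast (R := ℝ)) hv
      have heR : (K1.edgeSet.ncard : ℝ) + (K2.edgeSet.ncard : ℝ) = (K.edgeSet.ncard : ℝ) := by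
        exact_mod_cast congrArg (Nat.cast (R := ℝ)) he
      nlinarith [b1, b2, hg0]

end Aux

/-- two distinct minimal densest subgraphs share at most one vertex. -/
theorem minimalDensest_share_at_most_one_vertex [Fintype V] (G : SimpleGraph V)
    (hG : G.Connected) (H1 H2 : G.Subgraph)
    (h1 : IsMinimalDensest G H1) (h2 : IsMinimalDensest G H2) (hne : H1 ≠ H2) :
    (H1.verts ∩ H2.verts).ncard ≤ 1 := by
  by_contra hcard
  push_neg at hcard
  obtain ⟨a, c, ha, hc, hac⟩ := (Set.one_lt_ncard_iff (Set.toFinite _)).mp hcard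
  -- get an adjacency in G
  obtain ⟨p⟩ := hG.preconnected a c
  have hadj : ∃ x, G.Adj a x := by
    cases p with
    | nil => exact absurd rfl hac
    | cons h q => exact ⟨_, h⟩
  obtain ⟨x, hax⟩ := hadj
  set g := fracArboricity G with hgdef
  have hg1 : (1 : ℝ) ≤ g := by
    have hd : density G (G.subgraphOfAdj hax) = 1 := by
      rw [density, SimpleGraph.edgeSet_subgraphOfAdj, SimpleGraph.subgraphOfAdj_verts,
        Set.ncard_singleton, Set.ncard_pair hax.ne]
      norm_num
    have := aux_density_le (G := G) (G.subgraphOfAdj hax) (SimpleGraph.Subgraph.subgraphOfAdj_connected hax)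
    rw [hd] at this
    exact this
  have hg0 : (0 : ℝ) ≤ g := by linarith
  set K : G.Subgraph := H1 ⊓ H2 with hKdef
  have hKverts : K.verts = H1.verts ∩ H2.verts := SimpleGraph.Subgraph.verts_inf H1 H2
  have hKne : K.verts.Nonempty := ⟨a, by rw [hKverts]; exact ha⟩
  -- numbers
  have hncap2 : 2 ≤ (H1.verts ∩ H2.verts).ncard := hcard
  have hn1 : 2 ≤ H1.verts.ncard :=
    le_trans hncap2 (Set.ncard_le_ncard Set.inter_subset_left (Set.toFinite _))
  have hn2 : 2 ≤ H2.verts.ncard :=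
    le_trans hncap2 (Set.ncard_le_ncard Set.inter_subset_right (Set.toFinite _))
  have hm1 : (H1.edgeSet.ncard : ℝ) = g * ((H1.verts.ncard : ℝ) - 1) := by
    have hd := h1.1.2
    rw [density] at hd
    have hpos : (0 : ℝ) < (H1.verts.ncard : ℝ) - 1 := by
      have : (2 : ℝ) ≤ (H1.verts.ncard : ℝ) := by exact_mod_cast hn1
      linarith
    rw [div_eq_iff (ne_of_gt hpos), ← hgdef] at hd
    exact hd
  have hm2 : (H2.edgeSet.ncard : ℝ) = g * ((H2.verts.ncard : ℝ) - 1) := by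
    have hd := h2.1.2
    rw [density] at hd
    have hpos : (0 : ℝ) < (H2.verts.ncard : ℝ) - 1 := by
      have : (2 : ℝ) ≤ (H2.verts.ncard : ℝ) := by exact_mod_cast hn2
      linarith
    rw [div_eq_iff (ne_of_gt hpos), ← hgdef] at hd
    exact hd
  -- the union
  have hUconn : (H1 ⊔ H2).Connected :=
    SimpleGraph.Subgraph.connected_sup h1.1.1.preconnected h2.1.1.preconnected hKne
  have hUbound := aux_mul_bound (G := G) (H1 ⊔ H2) hUconn
  -- counting identities
  have hvcount : (H1 ⊔ H2).verts.ncard + K.verts.ncard = H1.verts.ncard + H2.verts.ncard := by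
    rw [SimpleGraph.Subgraph.verts_sup, hKverts]
    exact Set.ncard_union_add_ncard_inter _ _ (Set.toFinite _) (Set.toFinite _)
  have hecount : (H1 ⊔ H2).edgeSet.ncard + K.edgeSet.ncard
      = H1.edgeSet.ncard + H2.edgeSet.ncard := by
    rw [SimpleGraph.Subgraph.edgeSet_sup, SimpleGraph.Subgraph.edgeSet_inf]
    exact Set.ncard_union_add_ncard_inter _ _ (Set.toFinite _) (Set.toFinite _)
  have hvcountR : ((H1 ⊔ H2).verts.ncard : ℝ) + (K.verts.ncard : ℝ)
      = (H1.verts.ncard : ℝ) + (H2.verts.ncard : ℝ) := by exact_mod_cast hvcount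
  have hecountR : ((H1 ⊔ H2).edgeSet.ncard : ℝ) + (K.edgeSet.ncard : ℝ)
      = (H1.edgeSet.ncard : ℝ) + (H2.edgeSet.ncard : ℝ) := by exact_mod_cast hecount
  -- lower bound on intersection edges
  have hKlower : g * ((K.verts.ncard : ℝ) - 1) ≤ (K.edgeSet.ncard : ℝ) := by
    nlinarith [hUbound, hm1, hm2, hvcountR, hecountR]
  have hKupper : (K.edgeSet.ncard : ℝ) ≤ g * ((K.verts.ncard : ℝ) - 1) := by
    have := aux_edge_card_bound (G := G) hg0 K.verts.ncard K le_rfl hKne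
    rw [← hgdef] at this
    exact this
  have hKeq : (K.edgeSet.ncard : ℝ) = g * ((K.verts.ncard : ℝ) - 1) :=
    le_antisymm hKupper hKlower
  have hncapR : (2 : ℝ) ≤ (K.verts.ncard : ℝ) := by
    rw [hKverts]; exact_mod_cast hncap2
  -- K is connected
  have hKconn : K.Connected := by
    by_contra hKc
    obtain ⟨K1, K2, h1ne', h2ne', _, _, hv', he'⟩ := aux_split K hKne hKc
    have b1 := aux_edge_card_bound (G := G) hg0 K1.verts.ncard K1 le_rfl h1ne'
    have b2 := aux_edge_card_bound (G := G) hg0 K2.verts.ncard K2 le_rfl h2ne'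
    rw [← hgdef] at b1 b2
    have hvR : (K1.verts.ncard : ℝ) + (K2.verts.ncard : ℝ) = (K.verts.ncard : ℝ) := by
      exact_mod_cast hv'
    have heR : (K1.edgeSet.ncard : ℝ) + (K2.edgeSet.ncard : ℝ) = (K.edgeSet.ncard : ℝ) := by
      exact_mod_cast he'
    nlinarith [b1, b2, hg1]
  -- K is densest
  have hKdensest : IsDensest G K := by
    refine ⟨hKconn, ?_⟩
    rw [density, hKeq, ← hgdef]
    have hpos : (0 : ℝ) < (K.verts.ncard : ℝ) - 1 := by linarith
    field_simp
  -- contradiction with minimality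
  rcases lt_or_eq_of_le (inf_le_left : K ≤ H1) with hlt | heq
  · exact h1.2 K hlt hKdensest
  · have hle : H1 ≤ H2 := inf_eq_left.mp heq
    exact h2.2 H1 (lt_of_le_of_ne hle hne) h1.1
end

section
/- The core of the arboricity game equals the set of nonnegative vectors x on the edges with x(E) = a(G) and x(T) ≤ 1 for every spanning tree T of G. -/
open scoped BigOperators

variable {V : Type*}

/-- A set of edges is a forest if the graph it spans is acyclic. -/
def IsForestEdgeSet (F : Set (Sym2 V)) : Prop :=
  (SimpleGraph.fromEdgeSet F).IsAcyclic

/-- Arboricity of an edge set: minimum number of forests covering it. -/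
noncomputable def arboricity (S : Set (Sym2 V)) : ℕ :=
  sInf {k : ℕ | ∃ F : Fin k → Set (Sym2 V),
    (∀ i, IsForestEdgeSet (F i)) ∧ S ⊆ ⋃ i, F i}

/-- A spanning tree of `G`, as a subgraph. -/
def IsSpanningTree (G : SimpleGraph V) (T : G.Subgraph) : Prop :=
  T.IsSpanning ∧ T.coe.IsTree

/-- Membership in the core of the arboricity game on `G`:
nonnegative, efficient, and no coalition pays more than its arboricity. -/
def inCore (G : SimpleGraph V) (x : Sym2 V → ℝ) : Prop :=
  (∀ e, 0 ≤ x e) ∧ (∑ᶠ e ∈ G.edgeSet, x e) = (arboricity G.edgeSet : ℝ) ∧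
    ∀ S : Set (Sym2 V), S ⊆ G.edgeSet → (∑ᶠ e ∈ S, x e) ≤ (arboricity S : ℝ)

open SimpleGraph in
lemma forest_mono {F' F : Set (Sym2 V)} (h : F' ⊆ F) (hF : IsForestEdgeSet F) :
    IsForestEdgeSet F' := by
  intro a c hc
  exact hF (c.mapLe (SimpleGraph.fromEdgeSet_mono h)) (hc.mapLe _)

lemma singleton_forest (e : Sym2 V) : IsForestEdgeSet {e} := by
  intro a c hc
  have h3 := hc.three_le_length
  have hl : 2 ≤ c.edges.length := by rw [SimpleGraph.Walk.length_edges]; omega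
  obtain ⟨a₁, l₁, he₁⟩ := List.exists_cons_of_ne_nil (l := c.edges)
    (by intro h; rw [h] at hl; simp at hl)
  obtain ⟨a₂, l₂, he₂⟩ := List.exists_cons_of_ne_nil (l := l₁)
    (by intro h; rw [h] at he₁; rw [he₁] at hl; simp at hl)
  have hmem : ∀ e' ∈ c.edges, e' = e := by
    intro e' he'
    have := c.edges_subset_edgeSet he'
    rw [SimpleGraph.edgeSet_fromEdgeSet] at this
    exact this.1
  have hn := hc.edges_nodup
  rw [he₁, he₂] at hn
  have h1 : a₁ = e := hmem a₁ (by rw [he₁]; exact List.mem_cons_self)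
  have h2 : a₂ = e := hmem a₂ (by rw [he₁, he₂]; simp)
  subst h1 h2
  simp at hn

lemma arboricity_le_one {S : Set (Sym2 V)} (h : IsForestEdgeSet S) : arboricity S ≤ 1 :=
  Nat.sInf_le ⟨fun _ => S, fun _ => h, fun e he => Set.mem_iUnion.2 ⟨0, he⟩⟩

lemma arboricity_nonempty [Finite V] (S : Set (Sym2 V)) :
    {k : ℕ | ∃ F : Fin k → Set (Sym2 V),
      (∀ i, IsForestEdgeSet (F i)) ∧ S ⊆ ⋃ i, F i}.Nonempty := by
  haveI := Fintype.ofFinite (Sym2 V)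
  refine ⟨Fintype.card (Sym2 V), fun i => {(Fintype.equivFin (Sym2 V)).symm i},
    fun i => singleton_forest _, fun e _ => ?_⟩
  exact Set.mem_iUnion.2 ⟨Fintype.equivFin (Sym2 V) e, by simp⟩

lemma isAcyclic_of_iso {W : Type*} {A : SimpleGraph V} {B : SimpleGraph W} (φ : A ≃g B)
    (hA : A.IsAcyclic) : B.IsAcyclic := by
  intro b c hc
  exact hA (c.map φ.symm.toHom) (hc.map φ.symm.injective)

lemma isAcyclic_sup_edge {H : SimpleGraph V} (hH : H.IsAcyclic) {u v : V} (hne : u ≠ v)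
    (hr : ¬ H.Reachable u v) : (H ⊔ SimpleGraph.fromEdgeSet {s(u,v)}).IsAcyclic := by
  intro a c hc
  by_cases hme : s(u,v) ∈ c.edges
  · obtain ⟨hadj, hreach⟩ :=
      (SimpleGraph.adj_and_reachable_delete_edges_iff_exists_cycle
        (G := H ⊔ SimpleGraph.fromEdgeSet {s(u,v)})).2 ⟨a, c, hc, hme⟩
    refine hr (hreach.mono ?_)
    intro a b hab
    rw [SimpleGraph.deleteEdges_adj, SimpleGraph.sup_adj, SimpleGraph.fromEdgeSet_adj] at hab
    tauto
  · have hsub : ∀ e' ∈ c.edges, e' ∈ H.edgeSet := by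
      intro e' he'
      have h1 := c.edges_subset_edgeSet he'
      rw [SimpleGraph.edgeSet_sup, SimpleGraph.edgeSet_fromEdgeSet] at h1
      rcases h1 with h1 | h1
      · exact h1
      · exact absurd (h1.1 ▸ he') hme
    exact hH (c.transfer H hsub) (hc.transfer hsub)

lemma fsum_eq [Finite V] (x : Sym2 V → ℝ) (S : Set (Sym2 V)) :
    ∑ᶠ e ∈ S, x e = ∑ e ∈ S.toFinite.toFinset, x e := by
  rw [← finsum_mem_coe_finset, Set.Finite.coe_toFinset]

lemma sum_biUnion_le' {ι α : Type*} [DecidableEq α] {f : α → ℝ} (hf : ∀ a, 0 ≤ f a)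
    (u : Finset ι) (t : ι → Finset α) :
    ∑ a ∈ u.biUnion t, f a ≤ ∑ i ∈ u, ∑ a ∈ t i, f a := by
  classical
  induction u using Finset.induction_on with
  | empty => simp
  | @insert a s ha ih =>
    rw [Finset.biUnion_insert, Finset.sum_insert ha]
    have h1 := Finset.sum_union_inter (s₁ := t a) (s₂ := s.biUnion t) (f := f)
    have h2 : 0 ≤ ∑ x ∈ (t a ∩ s.biUnion t), f x := Finset.sum_nonneg fun _ _ => hf _
    linarith

lemma forest_le_one [Fintype V] (G : SimpleGraph V) (hG : G.Connected) (x : Sym2 V → ℝ)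
    (hx0 : ∀ e, 0 ≤ x e)
    (hT : ∀ T : G.Subgraph, IsSpanningTree G T → (∑ᶠ e ∈ T.edgeSet, x e) ≤ 1) :
    ∀ F ⊆ G.edgeSet, IsForestEdgeSet F → (∑ᶠ e ∈ F, x e) ≤ 1 := by
  suffices H : ∀ (n : ℕ) (F : Set (Sym2 V)), (G.edgeSet \ F).ncard = n →
      F ⊆ G.edgeSet → IsForestEdgeSet F → (∑ᶠ e ∈ F, x e) ≤ 1 by
    exact fun F hFE hF => H _ F rfl hFE hF
  intro n
  induction n using Nat.strong_induction_on with
  | _ n IH =>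
  intro F hn hFE hF
  by_cases hex : ∃ e ∈ G.edgeSet, e ∉ F ∧ IsForestEdgeSet (insert e F)
  · obtain ⟨e, heE, heF, hins⟩ := hex
    have hsub : insert e F ⊆ G.edgeSet := Set.insert_subset heE hFE
    have hcard : (G.edgeSet \ insert e F).ncard < n := by
      rw [← hn]
      apply Set.ncard_lt_ncard
      · constructor
        · intro a ha
          exact ⟨ha.1, fun h => ha.2 (Set.mem_insert_of_mem _ h)⟩
        · intro hsub'
          exact (hsub' ⟨heE, heF⟩).2 (Set.mem_insert _ _)
      · exact (G.edgeSet \ F).toFinite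
    have h1 : (∑ᶠ e' ∈ F, x e') ≤ ∑ᶠ e' ∈ insert e F, x e' := by
      rw [fsum_eq, fsum_eq]
      apply Finset.sum_le_sum_of_subset_of_nonneg
      · intro a ha
        simp only [Set.Finite.mem_toFinset] at ha ⊢
        exact Set.mem_insert_of_mem _ ha
      · exact fun a _ _ => hx0 a
    exact h1.trans (IH _ hcard _ rfl hsub hins)
  · push_neg at hex
    set Hg : SimpleGraph V := SimpleGraph.fromEdgeSet F with hHg
    have hle : Hg ≤ G := by
      rw [hHg, ← SimpleGraph.fromEdgeSet_edgeSet (G := G)]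
      exact SimpleGraph.fromEdgeSet_mono hFE
    have hreach : ∀ a b, G.Adj a b → Hg.Reachable a b := by
      intro a b hab
      by_contra hnr
      by_cases hmem : s(a, b) ∈ F
      · exact hnr (SimpleGraph.Adj.reachable
          ((SimpleGraph.fromEdgeSet_adj F).2 ⟨hmem, hab.ne⟩))
      · refine hex s(a,b) hab hmem ?_
        have heq : SimpleGraph.fromEdgeSet (insert s(a,b) F)
            = Hg ⊔ SimpleGraph.fromEdgeSet {s(a,b)} := by
          ext u v
          simp only [SimpleGraph.fromEdgeSet_adj, SimpleGraph.sup_adj, Set.mem_insert_iff,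
            Set.mem_singleton_iff, hHg]
          tauto
        unfold IsForestEdgeSet
        rw [heq]
        exact isAcyclic_sup_edge hF hab.ne hnr
    have hconn : Hg.Connected := by
      haveI : Nonempty V := hG.nonempty
      refine ⟨fun a b => ?_⟩
      obtain ⟨w⟩ := hG.preconnected a b
      induction w with
      | nil => exact SimpleGraph.Reachable.refl _
      | cons h p ih => exact (hreach _ _ h).trans ih
    set T : G.Subgraph := SimpleGraph.toSubgraph Hg hle with hTdef
    have hTspan : T.IsSpanning := fun v => Set.mem_univ v
    have hTedge : T.edgeSet = F := by
      have h1 : T.edgeSet = Hg.edgeSet := by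
        ext e
        refine Sym2.ind (fun u v => ?_) e
        simp [hTdef, SimpleGraph.toSubgraph, SimpleGraph.Subgraph.mem_edgeSet,
          SimpleGraph.mem_edgeSet]
      rw [h1, hHg, SimpleGraph.edgeSet_fromEdgeSet]
      ext e
      simp only [Set.mem_diff, Set.mem_setOf_eq, and_iff_left_iff_imp]
      exact fun he => G.not_isDiag_of_mem_edgeSet (hFE he)
    have hTspanCoe : T.spanningCoe = Hg := by
      ext u v
      rfl
    have hTtree : T.coe.IsTree := by
      have hiso := T.spanningCoeEquivCoeOfSpanning hTspan
      constructor
      · rw [← (SimpleGraph.Iso.connected_iff hiso)]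
        rw [hTspanCoe]
        exact hconn
      · exact isAcyclic_of_iso hiso (by rw [hTspanCoe]; exact hF)
    have := hT T ⟨hTspan, hTtree⟩
    rwa [hTedge] at this

lemma spanning_tree_forest {G : SimpleGraph V} {T : G.Subgraph} (h : IsSpanningTree G T) :
    IsForestEdgeSet T.edgeSet := by
  have heq : SimpleGraph.fromEdgeSet T.edgeSet = T.spanningCoe := by
    ext u v
    simp only [SimpleGraph.fromEdgeSet_adj, SimpleGraph.Subgraph.mem_edgeSet]
    exact ⟨fun hh => hh.1, fun hh => ⟨hh, hh.ne⟩⟩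
  unfold IsForestEdgeSet
  rw [heq]
  exact isAcyclic_of_iso (T.spanningCoeEquivCoeOfSpanning h.1).symm h.2.IsAcyclic

/-- the core of the arboricity game equals the set of nonnegative
vectors with x(E) = a(G) and x(T) ≤ 1 for every spanning tree T. -/
theorem core_spanning_tree_characterization [Fintype V] (G : SimpleGraph V)
    (hG : G.Connected) (x : Sym2 V → ℝ) :
    inCore G x ↔
      ((∀ e, 0 ≤ x e) ∧ (∑ᶠ e ∈ G.edgeSet, x e) = (arboricity G.edgeSet : ℝ) ∧
        ∀ T : G.Subgraph, IsSpanningTree G T → (∑ᶠ e ∈ T.edgeSet, x e) ≤ 1) := by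
  classical
  constructor
  · rintro ⟨hx0, heff, hcoal⟩
    refine ⟨hx0, heff, fun T hT => ?_⟩
    have h1 := hcoal T.edgeSet T.edgeSet_subset
    have h2 : arboricity T.edgeSet ≤ 1 := arboricity_le_one (spanning_tree_forest hT)
    calc (∑ᶠ e ∈ T.edgeSet, x e) ≤ (arboricity T.edgeSet : ℝ) := h1
      _ ≤ 1 := by exact_mod_cast h2
  · rintro ⟨hx0, heff, htree⟩
    refine ⟨hx0, heff, fun S hS => ?_⟩
    have hkey := forest_le_one G hG x hx0 htree
    obtain ⟨F, hFforest, hFcover⟩ := Nat.sInf_mem (arboricity_nonempty S)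
    set k := arboricity S with hk
    have hsum : (∑ᶠ e ∈ S, x e) ≤ ∑ i : Fin k, ∑ᶠ e ∈ (F i ∩ S), x e := by
      rw [fsum_eq]
      have hstep : ∀ i : Fin k, (∑ᶠ e ∈ (F i ∩ S), x e)
          = ∑ e ∈ (F i ∩ S).toFinite.toFinset, x e := fun i => fsum_eq x _
      calc ∑ e ∈ S.toFinite.toFinset, x e
          ≤ ∑ e ∈ Finset.univ.biUnion (fun i : Fin k => (F i ∩ S).toFinite.toFinset), x e := by
            apply Finset.sum_le_sum_of_subset_of_nonneg
            · intro a ha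
              simp only [Set.Finite.mem_toFinset] at ha
              obtain ⟨i, hi⟩ := Set.mem_iUnion.1 (hFcover ha)
              exact Finset.mem_biUnion.2 ⟨i, Finset.mem_univ i, by
                simp only [Set.Finite.mem_toFinset]; exact ⟨hi, ha⟩⟩
            · exact fun a _ _ => hx0 a
        _ ≤ ∑ i : Fin k, ∑ e ∈ (F i ∩ S).toFinite.toFinset, x e :=
            sum_biUnion_le' hx0 _ _
        _ = ∑ i : Fin k, ∑ᶠ e ∈ (F i ∩ S), x e := by
            exact Finset.sum_congr rfl fun i _ => (hstep i).symm
    have hone : ∀ i : Fin k, (∑ᶠ e ∈ (F i ∩ S), x e) ≤ 1 := by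
      intro i
      exact hkey _ ((Set.inter_subset_right).trans hS)
        (forest_mono Set.inter_subset_left (hFforest i))
    calc (∑ᶠ e ∈ S, x e) ≤ ∑ i : Fin k, ∑ᶠ e ∈ (F i ∩ S), x e := hsum
      _ ≤ ∑ _i : Fin k, (1 : ℝ) := Finset.sum_le_sum fun i _ => hone i
      _ = k := by simp
end

section
/- If the core of the arboricity game is nonempty, then every core allocation x satisfies x_e = 0 for every edge e not belonging to any densest subgraph of G. -/
open scoped BigOperators
open SimpleGraph
open scoped Classical

variable {V : Type*}

lemma IsAcyclic.anti {A B : SimpleGraph V} (h : A ≤ B) (hB : B.IsAcyclic) : A.IsAcyclic :=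
  fun _v c hc => hB (c.mapLe h) (hc.mapLe h)

lemma forest_subset {A B : Set (Sym2 V)} (hB : IsForestEdgeSet B) (h : A ⊆ B) :
    IsForestEdgeSet A :=
  IsAcyclic.anti (SimpleGraph.fromEdgeSet_mono h) hB

lemma forest_insert {A : Set (Sym2 V)} {u v : V} (hA : IsForestEdgeSet A) (huv : u ≠ v)
    (hr : ¬ (SimpleGraph.fromEdgeSet A).Reachable u v) :
    IsForestEdgeSet (insert s(u,v) A) := by
  intro w c hc
  have hbr : (fromEdgeSet (insert s(u,v) A)).IsBridge s(u,v) := by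
    rw [isBridge_iff]
    · intro hreach
      refine hr (hreach.mono ?_)
      intro x y hxy
      rw [deleteEdges, sdiff_adj, fromEdgeSet_adj, fromEdgeSet_adj] at hxy
      obtain ⟨⟨hmem, hne⟩, hnot⟩ := hxy
      rw [fromEdgeSet_adj]
      rcases Set.mem_insert_iff.1 hmem with h1 | h1
      · exact absurd ⟨Set.mem_singleton_iff.2 h1, hne⟩ hnot
      · exact ⟨h1, hne⟩
  have hnotmem : s(u,v) ∉ c.edges :=
    (isBridge_iff_forall_cycle_notMem ((SimpleGraph.mem_edgeSet _).2 (by rw [fromEdgeSet_adj]; exact ⟨Set.mem_insert _ _, huv⟩))).1 hbr c hc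
  have hsub : ∀ f ∈ c.edges, f ∈ (fromEdgeSet A).edgeSet := by
    intro f hf
    have hf' := c.edges_subset_edgeSet hf
    rw [edgeSet_fromEdgeSet] at hf' ⊢
    rcases hf' with ⟨hmem, hdiag⟩
    rcases Set.mem_insert_iff.1 hmem with h1 | h1
    · exact absurd (h1 ▸ hf) hnotmem
    · exact ⟨h1, hdiag⟩
  exact hA (c.transfer _ hsub) (hc.transfer hsub)

lemma exists_maximal_forest :
    ∀ (n : ℕ) (S T0 : Finset (Sym2 V)), S.card - T0.card ≤ n → T0 ⊆ S →
      IsForestEdgeSet (T0 : Set (Sym2 V)) →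
    ∃ T : Finset (Sym2 V), T0 ⊆ T ∧ T ⊆ S ∧ IsForestEdgeSet (T : Set (Sym2 V)) ∧
      ∀ f ∈ S, f ∉ T → ¬ IsForestEdgeSet (insert f (T : Set (Sym2 V))) := by
  intro n
  induction n with
  | zero =>
    intro S T0 hcard hsub hT0
    refine ⟨T0, subset_rfl, hsub, hT0, ?_⟩
    intro f hfS hfT0 _
    have : T0.card < S.card := Finset.card_lt_card (Finset.ssubset_iff_of_subset hsub |>.2 ⟨f, hfS, hfT0⟩)
    omega
  | succ n ih =>
    intro S T0 hcard hsub hT0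
    by_cases h : ∃ f ∈ S, f ∉ T0 ∧ IsForestEdgeSet (insert f (T0 : Set (Sym2 V)))
    · obtain ⟨f, hfS, hfT0, hfor⟩ := h
      have hcard' : S.card - (insert f T0).card ≤ n := by
        rw [Finset.card_insert_of_notMem hfT0]
        have : T0.card < S.card := Finset.card_lt_card (Finset.ssubset_iff_of_subset hsub |>.2 ⟨f, hfS, hfT0⟩)
        omega
      obtain ⟨T, h1, h2, h3, h4⟩ := ih S (insert f T0) hcard' (Finset.insert_subset hfS hsub)
        (by rwa [Finset.coe_insert])
      exact ⟨T, (Finset.subset_insert _ _).trans h1, h2, h3, h4⟩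
    · push_neg at h
      refine ⟨T0, subset_rfl, hsub, hT0, fun f hfS hfT0 => h f hfS hfT0⟩

def edgeSub (G : SimpleGraph V) (A : Finset (Sym2 V)) (W : Set V)
    (hA : (A : Set (Sym2 V)) ⊆ G.edgeSet) : G.Subgraph where
  verts := W
  Adj u v := s(u,v) ∈ A ∧ u ∈ W ∧ v ∈ W
  adj_sub h := (SimpleGraph.mem_edgeSet G).1 (hA (Finset.mem_coe.2 h.1))
  edge_vert h := h.2.1
  symm := ⟨fun u v h => ⟨by rw [Sym2.eq_swap]; exact h.1, h.2.2, h.2.1⟩⟩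

noncomputable def cmpEdge (S : Finset (Sym2 V)) (f : Sym2 V) :
    (fromEdgeSet (S : Set (Sym2 V))).ConnectedComponent :=
  (fromEdgeSet (S : Set (Sym2 V))).connectedComponentMk (Quot.out f).1

lemma sym2_ne {G : SimpleGraph V} {S : Finset (Sym2 V)} (hS : (S : Set (Sym2 V)) ⊆ G.edgeSet)
    {u v : V} (hf : s(u,v) ∈ S) : u ≠ v := by
  have := G.not_isDiag_of_mem_edgeSet (hS (Finset.mem_coe.2 hf))
  simpa [Sym2.mk_isDiag_iff] using this

lemma mem_fromEdgeSet_adj {S : Finset (Sym2 V)} {u v : V} (huv : u ≠ v) (hf : s(u,v) ∈ S) :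
    (fromEdgeSet (S : Set (Sym2 V))).Adj u v := by
  rw [fromEdgeSet_adj]; exact ⟨Finset.mem_coe.2 hf, huv⟩

lemma cmpEdge_spec {G : SimpleGraph V} {S : Finset (Sym2 V)}
    (hS : (S : Set (Sym2 V)) ⊆ G.edgeSet) {u v : V} (hf : s(u,v) ∈ S) :
    (fromEdgeSet (S : Set (Sym2 V))).connectedComponentMk u = cmpEdge S s(u,v) := by
  have hne : u ≠ v := sym2_ne hS hf
  have hout : s((Quot.out (s(u,v) : Sym2 V)).1, (Quot.out (s(u,v) : Sym2 V)).2)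
      = s(u,v) := by
    exact Quot.out_eq _
  rw [Sym2.eq_iff] at hout
  unfold cmpEdge
  rcases hout with ⟨h1, _h2⟩ | ⟨h1, _h2⟩
  · rw [h1]
  · rw [h1]
    exact ConnectedComponent.connectedComponentMk_eq_of_adj (mem_fromEdgeSet_adj hne hf)

lemma cmpEdge_mem_supp {G : SimpleGraph V} {S : Finset (Sym2 V)}
    (hS : (S : Set (Sym2 V)) ⊆ G.edgeSet) {u v : V} (hf : s(u,v) ∈ S)
    (K : (fromEdgeSet (S : Set (Sym2 V))).ConnectedComponent) :
    u ∈ K.supp ↔ cmpEdge S s(u,v) = K := by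
  rw [ConnectedComponent.mem_supp_iff, cmpEdge_spec hS hf]

lemma cmpEdge_swap (S : Finset (Sym2 V)) (u v : V) :
    cmpEdge S s(u,v) = cmpEdge S s(v,u) := by rw [Sym2.eq_swap]

lemma mem_supp_right {G : SimpleGraph V} {S : Finset (Sym2 V)}
    (hS : (S : Set (Sym2 V)) ⊆ G.edgeSet) {u v : V} (hf : s(u,v) ∈ S)
    {K : (fromEdgeSet (S : Set (Sym2 V))).ConnectedComponent}
    (h : cmpEdge S s(u,v) = K) : v ∈ K.supp := by
  have hf' : s(v,u) ∈ S := by rwa [Sym2.eq_swap]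
  exact (cmpEdge_mem_supp hS hf' K).2 ((cmpEdge_swap S v u).trans h)

lemma reach_in_edgeSub' (G : SimpleGraph V) (A : Finset (Sym2 V)) (W : Set V)
    (hA : (A : Set (Sym2 V)) ⊆ G.edgeSet)
    (hWA : ∀ u w : V, s(u,w) ∈ A → u ∈ W → w ∈ W) :
    ∀ {u v : V} (_p : (fromEdgeSet (A : Set (Sym2 V))).Walk u v) (hu : u ∈ W),
      ∃ hv : v ∈ W, (edgeSub G A W hA).coe.Reachable ⟨u, hu⟩ ⟨v, hv⟩ := by
  intro u v p
  induction p with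
  | nil => exact fun hu => ⟨hu, Reachable.refl _⟩
  | @cons u w v h p ih =>
    intro hu
    rw [fromEdgeSet_adj] at h
    have hwA : s(u,w) ∈ A := Finset.mem_coe.1 h.1
    have hw : w ∈ W := hWA u w hwA hu
    obtain ⟨hv, hr⟩ := ih hw
    refine ⟨hv, Reachable.trans (Adj.reachable ?_) hr⟩
    rw [Subgraph.coe_adj]
    exact ⟨hwA, hu, hw⟩

lemma component_bound [Fintype V] {G : SimpleGraph V} {a : ℕ} {e : Sym2 V}
    (hub : ∀ H : G.Subgraph, H.Connected → 2 ≤ H.verts.ncard →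
      H.edgeSet.ncard ≤ a * (H.verts.ncard - 1))
    (hstrict : ∀ H : G.Subgraph, H.Connected → 2 ≤ H.verts.ncard → e ∈ H.edgeSet →
      H.edgeSet.ncard + 1 ≤ a * (H.verts.ncard - 1))
    (S T : Finset (Sym2 V)) (hSE : (S : Set (Sym2 V)) ⊆ G.edgeSet) (hTS : T ⊆ S)
    (hT : IsForestEdgeSet (T : Set (Sym2 V)))
    (hmax : ∀ f ∈ S, f ∉ T → ¬ IsForestEdgeSet (insert f (T : Set (Sym2 V))))
    (K : (fromEdgeSet (S : Set (Sym2 V))).ConnectedComponent) :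
    (S.filter (fun f => cmpEdge S f = K)).card + (if e ∈ S ∧ cmpEdge S e = K then 1 else 0)
      ≤ a * (T.filter (fun f => cmpEdge S f = K)).card := by
  by_cases hnon : (S.filter (fun f => cmpEdge S f = K)).Nonempty
  case neg =>
    rw [Finset.not_nonempty_iff_eq_empty] at hnon
    have he0 : ¬ (e ∈ S ∧ cmpEdge S e = K) := by
      rintro ⟨h1, h2⟩
      have : e ∈ S.filter (fun f => cmpEdge S f = K) := Finset.mem_filter.2 ⟨h1, h2⟩
      rw [hnon] at this
      exact absurd this (Finset.notMem_empty e)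
    rw [hnon, if_neg he0]
    simp
  case pos =>
  obtain ⟨f₀, hf₀⟩ := hnon
  rw [Finset.mem_filter] at hf₀
  revert hf₀
  induction f₀ using Sym2.ind with | _ u₀ v₀ =>
  rintro ⟨hf₀S, hf₀K⟩
  have hne₀ : u₀ ≠ v₀ := sym2_ne hSE hf₀S
  set W : Set V := K.supp with hWdef
  have hu₀ : u₀ ∈ W := (cmpEdge_mem_supp hSE hf₀S K).2 hf₀K
  have hv₀ : v₀ ∈ W := mem_supp_right hSE hf₀S hf₀K
  have h2n : 2 ≤ W.ncard := (Set.one_lt_ncard_iff (Set.toFinite W)).2 ⟨u₀, v₀, hu₀, hv₀, hne₀⟩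
  have hclosS : ∀ u w : V, s(u,w) ∈ S → u ∈ W → w ∈ W := by
    intro u w huw hu
    exact mem_supp_right hSE huw ((cmpEdge_mem_supp hSE huw K).1 hu)
  have hTE : (T : Set (Sym2 V)) ⊆ G.edgeSet := fun f hf => hSE (hTS hf)
  have hclosT : ∀ u w : V, s(u,w) ∈ T → u ∈ W → w ∈ W := fun u w h hu =>
    hclosS u w (hTS h) hu
  -- edge set identifications
  have hedgeS : (edgeSub G S W hSE).edgeSet
      = ↑(S.filter (fun f => cmpEdge S f = K)) := by
    ext f
    induction f using Sym2.ind with | _ u v =>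
    rw [Subgraph.mem_edgeSet]
    constructor
    · rintro ⟨h1, h2, _h3⟩
      exact Finset.mem_coe.2 (Finset.mem_filter.2 ⟨h1, (cmpEdge_mem_supp hSE h1 K).1 h2⟩)
    · intro h
      obtain ⟨h1, h2⟩ := Finset.mem_filter.1 (Finset.mem_coe.1 h)
      exact ⟨h1, (cmpEdge_mem_supp hSE h1 K).2 h2, mem_supp_right hSE h1 h2⟩
  have hedgeT : (edgeSub G T W hTE).edgeSet
      = ↑(T.filter (fun f => cmpEdge S f = K)) := by
    ext f
    induction f using Sym2.ind with | _ u v =>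
    rw [Subgraph.mem_edgeSet]
    constructor
    · rintro ⟨h1, h2, _h3⟩
      exact Finset.mem_coe.2 (Finset.mem_filter.2
        ⟨h1, (cmpEdge_mem_supp hSE (hTS h1) K).1 h2⟩)
    · intro h
      obtain ⟨h1, h2⟩ := Finset.mem_filter.1 (Finset.mem_coe.1 h)
      exact ⟨h1, (cmpEdge_mem_supp hSE (hTS h1) K).2 h2, mem_supp_right hSE (hTS h1) h2⟩
  -- connectivity of the S-component subgraph
  have hconnS : (edgeSub G S W hSE).Connected := by
    rw [Subgraph.connected_iff]
    refine ⟨Subgraph.Preconnected.mk ?_, ⟨u₀, hu₀⟩⟩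
    rintro ⟨p, hp⟩ ⟨q, hq⟩
    have hreach : (fromEdgeSet (S : Set (Sym2 V))).Reachable p q :=
      ConnectedComponent.exact
        (((ConnectedComponent.mem_supp_iff K p).1 hp).trans
          (((ConnectedComponent.mem_supp_iff K q).1 hq)).symm)
    obtain ⟨w⟩ := hreach
    obtain ⟨hv, hr⟩ := reach_in_edgeSub' G S W hSE hclosS w hp
    exact hr
  have hmS : (S.filter (fun f => cmpEdge S f = K)).card ≤ a * (W.ncard - 1) := by
    have h := hub (edgeSub G S W hSE) hconnS h2n
    rwa [hedgeS, Set.ncard_coe_finset] at h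
  have hmS' : e ∈ S → cmpEdge S e = K →
      (S.filter (fun f => cmpEdge S f = K)).card + 1 ≤ a * (W.ncard - 1) := by
    intro h1 h2
    have he' : e ∈ (edgeSub G S W hSE).edgeSet := by
      rw [hedgeS]
      exact Finset.mem_coe.2 (Finset.mem_filter.2 ⟨h1, h2⟩)
    have h := hstrict (edgeSub G S W hSE) hconnS h2n he'
    rwa [hedgeS, Set.ncard_coe_finset] at h
  -- the T-subgraph is a spanning tree of the component
  have stepA : ∀ u w : V, (fromEdgeSet (S : Set (Sym2 V))).Adj u w →
      (fromEdgeSet (T : Set (Sym2 V))).Reachable u w := by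
    intro u w h
    rw [fromEdgeSet_adj] at h
    by_cases hmem : s(u,w) ∈ T
    · exact (mem_fromEdgeSet_adj h.2 hmem).reachable
    · by_contra hnr
      exact hmax _ (Finset.mem_coe.1 h.1) hmem (forest_insert hT h.2 hnr)
  have stepB : ∀ {u v : V}, (fromEdgeSet (S : Set (Sym2 V))).Walk u v →
      (fromEdgeSet (T : Set (Sym2 V))).Reachable u v := by
    intro u v p
    induction p with
    | nil => exact Reachable.refl _
    | cons h _p ih => exact (stepA _ _ h).trans ih
  have hconnT : (edgeSub G T W hTE).coe.Connected := by
    have : (edgeSub G T W hTE).Connected := by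
      rw [Subgraph.connected_iff]
      refine ⟨Subgraph.Preconnected.mk ?_, ⟨u₀, hu₀⟩⟩
      rintro ⟨p, hp⟩ ⟨q, hq⟩
      have hreach : (fromEdgeSet (S : Set (Sym2 V))).Reachable p q :=
        ConnectedComponent.exact
          (((ConnectedComponent.mem_supp_iff K p).1 hp).trans
            (((ConnectedComponent.mem_supp_iff K q).1 hq)).symm)
      obtain ⟨w⟩ := hreach
      obtain ⟨w'⟩ := stepB w
      obtain ⟨hv, hr⟩ := reach_in_edgeSub' G T W hTE hclosT w' hp
      exact hr
    exact this.coe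
  have hacyT : (edgeSub G T W hTE).coe.IsAcyclic := by
    intro v c hc
    let φ : (edgeSub G T W hTE).coe →g fromEdgeSet (T : Set (Sym2 V)) :=
      ⟨Subtype.val, by
        intro x y hxy
        rw [Subgraph.coe_adj] at hxy
        rw [fromEdgeSet_adj]
        exact ⟨Finset.mem_coe.2 hxy.1, G.ne_of_adj ((edgeSub G T W hTE).adj_sub hxy)⟩⟩
    have hinj : Function.Injective φ := Subtype.val_injective
    exact hT (c.map φ) (hc.map hinj)
  have htree : (edgeSub G T W hTE).coe.IsTree := ⟨hconnT, hacyT⟩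
  letI : Fintype ((edgeSub G T W hTE).coe.edgeSet) := Fintype.ofFinite _
  have hcount := htree.card_edgeFinset
  have himg : Sym2.map (Subtype.val : ↥(edgeSub G T W hTE).verts → V) ''
        (edgeSub G T W hTE).coe.edgeSet
      = (edgeSub G T W hTE).edgeSet := by
    apply Set.Subset.antisymm
    · rintro f ⟨f', hf', rfl⟩
      rw [Subgraph.edgeSet_coe] at hf'
      exact hf'
    · intro f hf
      induction f using Sym2.ind with | _ u v =>
      have hf' := Subgraph.mem_edgeSet.1 hf
      refine ⟨s(⟨u, hf'.2.1⟩, ⟨v, hf'.2.2⟩), ?_, by simp⟩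
      rw [Subgraph.edgeSet_coe]
      simpa using hf
  have hcardTK : (edgeSub G T W hTE).coe.edgeFinset.card
      = (T.filter (fun f => cmpEdge S f = K)).card := by
    have h1 : (edgeSub G T W hTE).coe.edgeFinset.card
        = (edgeSub G T W hTE).coe.edgeSet.ncard := by
      rw [Set.ncard_eq_toFinset_card']
      congr 1
    rw [h1, ← Set.ncard_image_of_injective _ (Sym2.map.injective Subtype.val_injective),
      himg, hedgeT, Set.ncard_coe_finset]
  have hTKcard : (T.filter (fun f => cmpEdge S f = K)).card + 1 = W.ncard := by
    rw [← hcardTK, hcount, ← Nat.card_eq_fintype_card]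
    exact Nat.card_coe_set_eq _
  have hTKcard' : (T.filter (fun f => cmpEdge S f = K)).card = W.ncard - 1 := by omega
  by_cases hecase : e ∈ S ∧ cmpEdge S e = K
  · rw [if_pos hecase, hTKcard']
    exact hmS' hecase.1 hecase.2
  · rw [if_neg hecase, hTKcard']
    simpa using hmS

lemma forest_empty : IsForestEdgeSet (∅ : Set (Sym2 V)) := by
  show (SimpleGraph.fromEdgeSet (∅ : Set (Sym2 V))).IsAcyclic
  rw [SimpleGraph.fromEdgeSet_empty]
  exact SimpleGraph.isAcyclic_bot

lemma rank_bound [Fintype V] {G : SimpleGraph V} {a : ℕ} {e : Sym2 V}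
    (hub : ∀ H : G.Subgraph, H.Connected → 2 ≤ H.verts.ncard →
      H.edgeSet.ncard ≤ a * (H.verts.ncard - 1))
    (hstrict : ∀ H : G.Subgraph, H.Connected → 2 ≤ H.verts.ncard → e ∈ H.edgeSet →
      H.edgeSet.ncard + 1 ≤ a * (H.verts.ncard - 1))
    (S T : Finset (Sym2 V)) (hSE : (S : Set (Sym2 V)) ⊆ G.edgeSet) (hTS : T ⊆ S)
    (hT : IsForestEdgeSet (T : Set (Sym2 V)))
    (hmax : ∀ f ∈ S, f ∉ T → ¬ IsForestEdgeSet (insert f (T : Set (Sym2 V)))) :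
    S.card + (if e ∈ S then 1 else 0) ≤ a * T.card := by
  letI : Fintype (fromEdgeSet (S : Set (Sym2 V))).ConnectedComponent := Fintype.ofFinite _
  have hsum_ite : ∑ K : (fromEdgeSet (S : Set (Sym2 V))).ConnectedComponent,
      (if e ∈ S ∧ cmpEdge S e = K then 1 else 0) = (if e ∈ S then 1 else 0) := by
    by_cases he : e ∈ S
    · rw [if_pos he]
      rw [Finset.sum_congr rfl (fun K _ => by
        rw [show (if e ∈ S ∧ cmpEdge S e = K then 1 else 0)
          = (if cmpEdge S e = K then 1 else 0) from by simp [he]])]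
      rw [Finset.sum_ite_eq]
      simp
    · rw [if_neg he]
      exact Finset.sum_eq_zero (fun K _ => by simp [he])
  calc S.card + (if e ∈ S then 1 else 0)
      = ∑ K : (fromEdgeSet (S : Set (Sym2 V))).ConnectedComponent,
          ((S.filter (fun f => cmpEdge S f = K)).card
            + (if e ∈ S ∧ cmpEdge S e = K then 1 else 0)) := by
        rw [Finset.sum_add_distrib, hsum_ite,
          ← Finset.card_eq_sum_card_fiberwise (fun x _ => Finset.mem_univ (cmpEdge S x))]
    _ ≤ ∑ K : (fromEdgeSet (S : Set (Sym2 V))).ConnectedComponent,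
          a * (T.filter (fun f => cmpEdge S f = K)).card :=
        Finset.sum_le_sum (fun K _ => component_bound hub hstrict S T hSE hTS hT hmax K)
    _ = a * T.card := by
        rw [← Finset.mul_sum,
          ← Finset.card_eq_sum_card_fiberwise (fun x _ => Finset.mem_univ (cmpEdge S x))]

lemma core_key [Fintype V] {G : SimpleGraph V} {a : ℕ} {e : Sym2 V}
    (hub : ∀ H : G.Subgraph, H.Connected → 2 ≤ H.verts.ncard →
      H.edgeSet.ncard ≤ a * (H.verts.ncard - 1))
    (hstrict : ∀ H : G.Subgraph, H.Connected → 2 ≤ H.verts.ncard → e ∈ H.edgeSet →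
      H.edgeSet.ncard + 1 ≤ a * (H.verts.ncard - 1)) :
    ∀ (n : ℕ) (S : Finset (Sym2 V)) (y : Sym2 V → ℝ),
      (S : Set (Sym2 V)) ⊆ G.edgeSet → (∀ f, 0 ≤ y f) → (∀ f, f ∉ S → y f = 0) →
      (S.filter (fun f => y f ≠ 0)).card ≤ n →
      ∃ T : Finset (Sym2 V), T ⊆ S ∧ IsForestEdgeSet (T : Set (Sym2 V)) ∧
        (∑ f ∈ S, y f) + y e ≤ (a : ℝ) * ∑ f ∈ T, y f := by
  intro n
  induction n with
  | zero =>
    intro S y hSE hy0 hyout hcard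
    have hempty : S.filter (fun f => y f ≠ 0) = ∅ := Finset.card_eq_zero.1 (Nat.le_zero.1 hcard)
    have hzero : ∀ f, y f = 0 := by
      intro f
      by_cases hf : f ∈ S
      · by_contra hne
        have : f ∈ S.filter (fun f => y f ≠ 0) := Finset.mem_filter.2 ⟨hf, hne⟩
        rw [hempty] at this
        exact absurd this (Finset.notMem_empty f)
      · exact hyout f hf
    refine ⟨∅, Finset.empty_subset _, ?_, ?_⟩
    · rw [Finset.coe_empty]
      exact forest_empty
    · rw [Finset.sum_eq_zero (fun f _ => hzero f), Finset.sum_empty, hzero e]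
      simp
  | succ n ih =>
    intro S y hSE hy0 hyout hcard
    by_cases hnon : (S.filter (fun f => y f ≠ 0)).Nonempty
    case neg =>
      rw [Finset.not_nonempty_iff_eq_empty] at hnon
      have hzero : ∀ f, y f = 0 := by
        intro f
        by_cases hf : f ∈ S
        · by_contra hne
          have : f ∈ S.filter (fun f => y f ≠ 0) := Finset.mem_filter.2 ⟨hf, hne⟩
          rw [hnon] at this
          exact absurd this (Finset.notMem_empty f)
        · exact hyout f hf
      refine ⟨∅, Finset.empty_subset _, ?_, ?_⟩
      · rw [Finset.coe_empty]
        exact forest_empty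
      · rw [Finset.sum_eq_zero (fun f _ => hzero f), Finset.sum_empty, hzero e]
        simp
    case pos =>
    set supp := S.filter (fun f => y f ≠ 0) with hsuppdef
    have hsuppS : supp ⊆ S := Finset.filter_subset _ _
    have hsuppE : (supp : Set (Sym2 V)) ⊆ G.edgeSet := fun f hf =>
      hSE (Finset.mem_coe.2 (hsuppS (Finset.mem_coe.1 hf)))
    obtain ⟨fm, hfm⟩ := hnon
    have himg : (supp.image y).Nonempty := ⟨y fm, Finset.mem_image_of_mem y hfm⟩
    set θ := (supp.image y).min' himg with hθdef
    obtain ⟨f₁, hf₁supp, hf₁θ⟩ := Finset.mem_image.1 ((supp.image y).min'_mem himg)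
    have hθpos : 0 < θ := by
      rw [hθdef, ← hf₁θ]
      rcases lt_or_eq_of_le (hy0 f₁) with h | h
      · exact h
      · exact absurd h.symm (Finset.mem_filter.1 hf₁supp).2
    have hθle : ∀ f ∈ supp, θ ≤ y f := fun f hf =>
      Finset.min'_le _ _ (Finset.mem_image_of_mem y hf)
    set y' := fun f => if f ∈ supp then y f - θ else 0 with hy'def
    have hy'0 : ∀ f, 0 ≤ y' f := by
      intro f
      by_cases hf : f ∈ supp
      · simp only [hy'def, if_pos hf]
        linarith [hθle f hf]
      · simp [hy'def, if_neg hf]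
    have hy'out : ∀ f, f ∉ supp → y' f = 0 := fun f hf => by simp [hy'def, if_neg hf]
    have hy'card : (supp.filter (fun f => y' f ≠ 0)).card ≤ n := by
      have hsub : supp.filter (fun f => y' f ≠ 0) ⊆ supp.erase f₁ := by
        intro f hf
        obtain ⟨hf1, hf2⟩ := Finset.mem_filter.1 hf
        refine Finset.mem_erase.2 ⟨?_, hf1⟩
        rintro rfl
        refine hf2 ?_
        simp only [hy'def, if_pos hf1]
        rw [hf₁θ, ← hθdef]
        ring
      have h1 : (supp.erase f₁).card < supp.card := Finset.card_erase_lt_of_mem hf₁supp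
      have h2 := Finset.card_le_card hsub
      omega
    obtain ⟨T', hT'supp, hT'for, hT'ineq⟩ := ih supp y' hsuppE hy'0 hy'out hy'card
    obtain ⟨Tm, hT'Tm, hTmsupp, hTmfor, hTmmax⟩ :=
      exists_maximal_forest supp.card supp T' (by omega) hT'supp hT'for
    have hrank := rank_bound hub hstrict supp Tm hsuppE hTmsupp hTmfor hTmmax
    refine ⟨Tm, hTmsupp.trans hsuppS, hTmfor, ?_⟩
    -- arithmetic
    have hA : ∑ f ∈ S, y f = ∑ f ∈ supp, y' f + (supp.card : ℝ) * θ := by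
      rw [show ∑ f ∈ S, y f = ∑ f ∈ supp, y f from
        (Finset.sum_filter_ne_zero S).symm]
      rw [Finset.sum_congr rfl (fun f hf => show y f = y' f + θ from by
        simp only [hy'def, if_pos hf]; ring)]
      rw [Finset.sum_add_distrib, Finset.sum_const, nsmul_eq_mul]
    have hδ : y e = y' e + (if e ∈ supp then θ else 0) := by
      by_cases h : e ∈ supp
      · simp only [hy'def, if_pos h]; ring
      · have hye : y e = 0 := by
          by_cases heS : e ∈ S
          · by_contra hne
            exact h (Finset.mem_filter.2 ⟨heS, hne⟩)
          · exact hyout e heS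
        simp [hy'def, if_neg h, hye]
    have hEℝ : (supp.card : ℝ) + (if e ∈ supp then 1 else 0) ≤ (a : ℝ) * Tm.card := by
      by_cases h : e ∈ supp
      · rw [if_pos h]
        rw [if_pos h] at hrank
        exact_mod_cast hrank
      · rw [if_neg h]
        rw [if_neg h] at hrank
        simp only [add_zero]
        exact_mod_cast hrank
    have hD : ∑ f ∈ T', y' f ≤ ∑ f ∈ Tm, y' f :=
      Finset.sum_le_sum_of_subset_of_nonneg hT'Tm (fun f _ _ => hy'0 f)
    have hF : ∑ f ∈ Tm, y f = ∑ f ∈ Tm, y' f + (Tm.card : ℝ) * θ := by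
      rw [Finset.sum_congr rfl (fun f hf => show y f = y' f + θ from by
        simp only [hy'def, if_pos (hTmsupp hf)]; ring)]
      rw [Finset.sum_add_distrib, Finset.sum_const, nsmul_eq_mul]
    have haR : (0 : ℝ) ≤ (a : ℝ) := Nat.cast_nonneg a
    have hθ0 : (0 : ℝ) ≤ θ := le_of_lt hθpos
    have hmul1 : (a : ℝ) * ∑ f ∈ T', y' f ≤ (a : ℝ) * ∑ f ∈ Tm, y' f :=
      mul_le_mul_of_nonneg_left hD haR
    have hmul2 : ((supp.card : ℝ) + (if e ∈ supp then 1 else 0)) * θ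
        ≤ ((a : ℝ) * Tm.card) * θ := mul_le_mul_of_nonneg_right hEℝ hθ0
    have hite : (if e ∈ supp then θ else 0) = (if e ∈ supp then (1:ℝ) else 0) * θ := by
      by_cases h : e ∈ supp <;> simp [h]
    rw [hA, hδ, hF, hite]
    ring_nf
    ring_nf at hT'ineq hmul1 hmul2
    linarith


/-- in any core allocation, an edge not in any densest subgraph
gets value zero. -/
theorem core_zero_outside_densest [Fintype V] (G : SimpleGraph V) (hG : G.Connected)
    (hcore : fracArboricity G = (arboricity G.edgeSet : ℝ))
    (x : Sym2 V → ℝ) (hx : inCore G x) (e : Sym2 V) (he : e ∈ G.edgeSet)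
    (hne : ∀ H : G.Subgraph, IsDensest G H → e ∉ H.edgeSet) :
    x e = 0 := by
  classical
  set a := arboricity G.edgeSet with hadef
  have hbdd : BddAbove {d : ℝ | ∃ H : G.Subgraph, H.Connected ∧ d = density G H} := by
    refine ⟨(Fintype.card (Sym2 V) : ℝ), ?_⟩
    rintro d ⟨H, hH, rfl⟩
    unfold density
    rcases le_or_gt ((H.verts.ncard : ℝ) - 1) 0 with h | h
    · have hd : (H.edgeSet.ncard : ℝ) / ((H.verts.ncard : ℝ) - 1) ≤ 0 :=
        div_nonpos_iff.mpr (Or.inl ⟨Nat.cast_nonneg _, h⟩)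
      exact hd.trans (Nat.cast_nonneg _)
    · have hm : (H.edgeSet.ncard : ℝ) ≤ (Fintype.card (Sym2 V) : ℝ) := by
        have h1 := Set.ncard_le_ncard (Set.subset_univ H.edgeSet) Set.finite_univ
        rw [Set.ncard_univ, Nat.card_eq_fintype_card] at h1
        exact_mod_cast h1
      have h1 : (1 : ℝ) ≤ (H.verts.ncard : ℝ) - 1 := by
        have h2 : (1 : ℝ) < (H.verts.ncard : ℝ) := by linarith
        have h3 : 1 < H.verts.ncard := by exact_mod_cast h2
        have h4 : (2 : ℝ) ≤ (H.verts.ncard : ℝ) := by exact_mod_cast h3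
        linarith
      exact (div_le_self (Nat.cast_nonneg _) h1).trans hm
  have hub : ∀ H : G.Subgraph, H.Connected → 2 ≤ H.verts.ncard →
      H.edgeSet.ncard ≤ a * (H.verts.ncard - 1) := by
    intro H hH h2
    have hle : density G H ≤ fracArboricity G := le_csSup hbdd ⟨H, hH, rfl⟩
    have hd : density G H ≤ (a : ℝ) := by rwa [hcore] at hle
    have hpos : (0 : ℝ) < (H.verts.ncard : ℝ) - 1 := by
      have h3 : (2 : ℝ) ≤ (H.verts.ncard : ℝ) := by exact_mod_cast h2
      linarith
    unfold density at hd
    rw [div_le_iff₀ hpos] at hd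
    have h1n : 1 ≤ H.verts.ncard := by omega
    have hcast : ((a * (H.verts.ncard - 1) : ℕ) : ℝ)
        = (a : ℝ) * ((H.verts.ncard : ℝ) - 1) := by
      rw [Nat.cast_mul, Nat.cast_sub h1n, Nat.cast_one]
    rw [← hcast] at hd
    exact_mod_cast hd
  have hstrict : ∀ H : G.Subgraph, H.Connected → 2 ≤ H.verts.ncard → e ∈ H.edgeSet →
      H.edgeSet.ncard + 1 ≤ a * (H.verts.ncard - 1) := by
    intro H hH h2 heH
    have hle : density G H ≤ fracArboricity G := le_csSup hbdd ⟨H, hH, rfl⟩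
    have hd : density G H < (a : ℝ) := by
      rcases lt_or_eq_of_le hle with h | h
      · rwa [hcore] at h
      · exact absurd heH (hne H ⟨hH, h⟩)
    have hpos : (0 : ℝ) < (H.verts.ncard : ℝ) - 1 := by
      have h3 : (2 : ℝ) ≤ (H.verts.ncard : ℝ) := by exact_mod_cast h2
      linarith
    unfold density at hd
    rw [div_lt_iff₀ hpos] at hd
    have h1n : 1 ≤ H.verts.ncard := by omega
    have hcast : ((a * (H.verts.ncard - 1) : ℕ) : ℝ)
        = (a : ℝ) * ((H.verts.ncard : ℝ) - 1) := by
      rw [Nat.cast_mul, Nat.cast_sub h1n, Nat.cast_one]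
    rw [← hcast] at hd
    have h5 : H.edgeSet.ncard < a * (H.verts.ncard - 1) := by exact_mod_cast hd
    omega
  have hforest : ∀ T : Finset (Sym2 V), (T : Set (Sym2 V)) ⊆ G.edgeSet →
      IsForestEdgeSet (T : Set (Sym2 V)) → ∑ f ∈ T, x f ≤ 1 := by
    intro T hTE hTfor
    have h1 := hx.2.2 (T : Set (Sym2 V)) hTE
    rw [finsum_mem_coe_finset] at h1
    have h2 : arboricity (T : Set (Sym2 V)) ≤ 1 := by
      apply Nat.sInf_le
      exact ⟨fun _ => (T : Set (Sym2 V)), fun _ => hTfor,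
        fun f hf => Set.mem_iUnion.2 ⟨0, hf⟩⟩
    have h3 : (arboricity (T : Set (Sym2 V)) : ℝ) ≤ 1 := by exact_mod_cast h2
    exact h1.trans h3
  have hE : (G.edgeFinset : Set (Sym2 V)) = G.edgeSet := G.coe_edgeFinset
  have hsum : ∑ f ∈ G.edgeFinset, x f = (a : ℝ) := by
    have h2 : ∑ f ∈ G.edgeFinset, x f = ∑ᶠ f ∈ G.edgeSet, x f := by
      rw [← hE, finsum_mem_coe_finset]
    rw [h2]
    exact hx.2.1
  set y : Sym2 V → ℝ := fun f => if f ∈ G.edgeFinset then x f else 0 with hydef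
  have hy0 : ∀ f, 0 ≤ y f := by
    intro f
    show (0 : ℝ) ≤ if f ∈ G.edgeFinset then x f else 0
    by_cases h : f ∈ G.edgeFinset
    · rw [if_pos h]; exact hx.1 f
    · rw [if_neg h]
  have hyout : ∀ f, f ∉ G.edgeFinset → y f = 0 := by
    intro f h
    show (if f ∈ G.edgeFinset then x f else 0) = 0
    rw [if_neg h]
  have hysum : ∑ f ∈ G.edgeFinset, y f = ∑ f ∈ G.edgeFinset, x f :=
    Finset.sum_congr rfl (fun f hf => by
      show (if f ∈ G.edgeFinset then x f else 0) = x f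
      rw [if_pos hf])
  have hye : y e = x e := by
    show (if e ∈ G.edgeFinset then x e else 0) = x e
    rw [if_pos (SimpleGraph.mem_edgeFinset.2 he)]
  obtain ⟨T, hTsub, hTfor, hT⟩ := core_key hub hstrict G.edgeFinset.card G.edgeFinset y
    (by rw [hE]) hy0 hyout (Finset.card_le_card (Finset.filter_subset _ _))
  have hTE : (T : Set (Sym2 V)) ⊆ G.edgeSet := by
    rw [← hE]
    exact Finset.coe_subset.2 hTsub
  have hyT : ∑ f ∈ T, y f = ∑ f ∈ T, x f :=
    Finset.sum_congr rfl (fun f hf => by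
      show (if f ∈ G.edgeFinset then x f else 0) = x f
      rw [if_pos (hTsub hf)])
  rw [hysum, hsum, hye, hyT] at hT
  have h1 : ∑ f ∈ T, x f ≤ 1 := hforest T hTE hTfor
  have h2 : (a : ℝ) * ∑ f ∈ T, x f ≤ (a : ℝ) * 1 :=
    mul_le_mul_of_nonneg_left h1 (Nat.cast_nonneg a)
  have hxe := hx.1 e
  linarith
end

section
/- The edge-set intersection of two densest subgraphs is either empty or induces a densest subgraph: if H and K are densest subgraphs of G with E(H) ∩ E(K) ≠ ∅, then H ∪ K is a densest subgraph, and the subgraph H ∩ K (on common vertices and edges) has density equal to a_f(G). -/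
open scoped BigOperators

variable {V : Type*}

private lemma finSub [Finite V] (G : SimpleGraph V) : Finite G.Subgraph := by
  have : Function.Injective (fun W : G.Subgraph => (W.verts, W.Adj)) := by
    intro a b h
    simp only [Prod.mk.injEq] at h
    exact SimpleGraph.Subgraph.ext h.1 h.2
  exact Finite.of_injective _ this

private lemma density_le_frac [Fintype V] (G : SimpleGraph V) (W : G.Subgraph)
    (hW : W.Connected) : density G W ≤ fracArboricity G := by
  have := finSub G
  have hfin : {d : ℝ | ∃ H : G.Subgraph, H.Connected ∧ d = density G H}.Finite := by
    refine (Set.finite_range (density G)).subset ?_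
    rintro d ⟨H, -, rfl⟩; exact ⟨H, rfl⟩
  exact le_csSup hfin.bddAbove ⟨W, hW, rfl⟩

/-- The linear bound for connected subgraphs. -/
private lemma conn_bound [Fintype V] (G : SimpleGraph V) (W : G.Subgraph)
    (hW : W.Connected) :
    (W.edgeSet.ncard : ℝ) ≤ fracArboricity G * ((W.verts.ncard : ℝ) - 1) := by
  rcases Nat.lt_or_ge W.verts.ncard 2 with h2 | h2
  · -- at most one vertex: no edges
    have he : W.edgeSet = ∅ := by
      by_contra h
      obtain ⟨e, he⟩ := Set.nonempty_iff_ne_empty.2 h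
      induction e using Sym2.ind with
      | _ x y =>
        rw [SimpleGraph.Subgraph.mem_edgeSet] at he
        have : ({x, y} : Set V) ⊆ W.verts := by
          rintro z (rfl | rfl); · exact he.fst_mem
          · exact he.snd_mem
        have := Set.ncard_le_ncard this W.verts.toFinite
        rw [Set.ncard_pair he.ne] at this
        omega
    have hn1 : 1 ≤ W.verts.ncard := (Set.ncard_pos W.verts.toFinite).2 hW.nonempty
    have : W.verts.ncard = 1 := by omega
    simp [he, this]
  · have hpos : (0 : ℝ) < (W.verts.ncard : ℝ) - 1 := by
      have : (2 : ℝ) ≤ (W.verts.ncard : ℝ) := by exact_mod_cast h2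
      linarith
    have := density_le_frac G W hW
    rw [density, div_le_iff₀ hpos] at this
    linarith [this]

/-- The linear bound for arbitrary nonempty subgraphs, by splitting off connected components. -/
private lemma gen_bound [Fintype V] (G : SimpleGraph V) (a : ℝ) (ha : 0 ≤ a)
    (hb : ∀ W : G.Subgraph, W.Connected → (W.edgeSet.ncard : ℝ) ≤ a * ((W.verts.ncard : ℝ) - 1)) :
    ∀ (n : ℕ) (W : G.Subgraph), W.verts.ncard ≤ n → W.verts.Nonempty →
      (W.edgeSet.ncard : ℝ) ≤ a * ((W.verts.ncard : ℝ) - 1) := by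
  intro n
  induction n with
  | zero =>
    intro W hc hne
    have := (Set.ncard_pos W.verts.toFinite).2 hne
    omega
  | succ n ih =>
    intro W hc ⟨v, hv⟩
    set s : Set V := {u | ∃ h : u ∈ W.verts, W.coe.Reachable ⟨v, hv⟩ ⟨u, h⟩} with hs
    have hsub : s ⊆ W.verts := fun u hu => hu.1
    have hvs : v ∈ s := ⟨hv, .refl _⟩
    have hclose : ∀ u u', W.Adj u u' → u ∈ s → u' ∈ s := by
      rintro u u' hadj ⟨hu, hr⟩
      exact ⟨hadj.snd_mem, hr.trans (SimpleGraph.Adj.reachable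
        (by exact hadj : W.coe.Adj ⟨u, hu⟩ ⟨u', hadj.snd_mem⟩))⟩
    set C := W.induce s with hC
    set W' := W.induce (W.verts \ s) with hW'
    -- edge partition
    have hE : W.edgeSet = C.edgeSet ∪ W'.edgeSet := by
      ext e
      induction e using Sym2.ind with
      | _ x y =>
        simp only [Set.mem_union, SimpleGraph.Subgraph.mem_edgeSet,
          SimpleGraph.Subgraph.induce_adj]
        constructor
        · intro h
          by_cases hx : x ∈ s
          · exact Or.inl ⟨hx, hclose _ _ h hx, h⟩
          · refine Or.inr ⟨⟨h.fst_mem, hx⟩, ⟨h.snd_mem, fun hy => hx (hclose _ _ h.symm hy)⟩, h⟩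
        · rintro (⟨-, -, h⟩ | ⟨-, -, h⟩) <;> exact h
    have hdisj : Disjoint C.edgeSet W'.edgeSet := by
      rw [Set.disjoint_left]
      intro e he he'
      induction e using Sym2.ind with
      | _ x y =>
        rw [SimpleGraph.Subgraph.mem_edgeSet, SimpleGraph.Subgraph.induce_adj] at he he'
        exact he'.1.2 he.1
    -- C is connected
    have hCconn : C.Connected := by
      rw [SimpleGraph.Subgraph.connected_iff]
      constructor
      · rw [SimpleGraph.Subgraph.preconnected_iff]
        have key : ∀ (x y : W.verts) (_ : W.coe.Walk x y) (hx : x.1 ∈ s),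
            ∃ hy : y.1 ∈ s, C.coe.Reachable ⟨x.1, hx⟩ ⟨y.1, hy⟩ := by
          intro x y p
          induction p with
          | nil => exact fun hx => ⟨hx, .refl _⟩
          | @cons x z y h q ihq =>
            intro hx
            have hz : z.1 ∈ s := hclose x.1 z.1 h hx
            obtain ⟨hy, hr⟩ := ihq hz
            refine ⟨hy, (SimpleGraph.Adj.reachable
              (by exact ⟨hx, hz, h⟩ : C.coe.Adj ⟨x.1, hx⟩ ⟨z.1, hz⟩)).trans hr⟩
        rintro ⟨x, hx⟩ ⟨y, hy⟩
        obtain ⟨hxv, hrx⟩ := hx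
        obtain ⟨hyv, hry⟩ := hy
        obtain ⟨hx', r1⟩ := key ⟨v, hv⟩ ⟨x, hxv⟩ hrx.some hvs
        obtain ⟨hy', r2⟩ := key ⟨v, hv⟩ ⟨y, hyv⟩ hry.some hvs
        exact (r1.symm.trans r2)
      · exact ⟨v, hvs⟩
    -- counting
    have hCe := hb C hCconn
    have hvsplit : W.verts.ncard = s.ncard + (W.verts \ s).ncard := by
      rw [← Set.ncard_union_eq Set.disjoint_sdiff_right s.toFinite (W.verts \ s).toFinite,
        Set.union_diff_cancel hsub]
    have hesplit : W.edgeSet.ncard = C.edgeSet.ncard + W'.edgeSet.ncard := by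
      rw [hE, Set.ncard_union_eq hdisj C.edgeSet.toFinite W'.edgeSet.toFinite]
    have hCv : C.verts = s := rfl
    have hWv : W'.verts = W.verts \ s := rfl
    rcases (W.verts \ s).eq_empty_or_nonempty with hemp | hne'
    · have hWe : W'.edgeSet.ncard = 0 := by
        have : W'.edgeSet = ∅ := by
          ext e
          induction e using Sym2.ind with
          | _ x y =>
            simp only [SimpleGraph.Subgraph.mem_edgeSet, Set.mem_empty_iff_false, iff_false]
            intro h
            have hx : x ∈ W.verts \ s := h.fst_mem
            rw [hemp] at hx
            exact hx
        simp [this]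
      have hseq : s = W.verts := by
        apply Set.eq_of_subset_of_subset hsub
        intro u hu
        by_contra h
        have : u ∈ W.verts \ s := ⟨hu, h⟩
        rw [hemp] at this
        exact this
      rw [hesplit, hWe]
      have := hCe
      rw [hCv, hseq] at this
      simpa using this
    · have hs1 : 1 ≤ s.ncard := (Set.ncard_pos s.toFinite).2 ⟨v, hvs⟩
      have hcard' : (W.verts \ s).ncard ≤ n := by omega
      have hWe := ih W' hcard' hne'
      rw [hWv] at hWe
      rw [hCv] at hCe
      have hx : (W.verts.ncard : ℝ) = (s.ncard : ℝ) + ((W.verts \ s).ncard : ℝ) := by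
        exact_mod_cast hvsplit
      have he' : (W.edgeSet.ncard : ℝ)
          = (C.edgeSet.ncard : ℝ) + (W'.edgeSet.ncard : ℝ) := by exact_mod_cast hesplit
      have : a * ((s.ncard : ℝ) - 1) + a * (((W.verts \ s).ncard : ℝ) - 1)
          ≤ a * ((W.verts.ncard : ℝ) - 1) := by
        rw [hx]; nlinarith
      linarith

/-- if two densest subgraphs share an edge, their union is a densest
subgraph and their intersection has density equal to the fractional arboricity. -/
theorem densest_intersection_union [Fintype V] (G : SimpleGraph V) (hG : G.Connected)
    (H K : G.Subgraph) (hH : IsDensest G H) (hK : IsDensest G K)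
    (hne : (H.edgeSet ∩ K.edgeSet).Nonempty) :
    IsDensest G (H ⊔ K) ∧ density G (H ⊓ K) = fracArboricity G := by
  obtain ⟨e, heH, heK⟩ := hne
  induction e using Sym2.ind with
  | _ x y =>
  set a := fracArboricity G with haa
  rw [SimpleGraph.Subgraph.mem_edgeSet] at heH heK
  have hxy : x ≠ y := heH.ne
  -- vertex counts at least 2
  have pair_card : ∀ (s : Set V), x ∈ s → y ∈ s → 2 ≤ s.ncard := by
    intro s hx hy
    have hsub : ({x, y} : Set V) ⊆ s := by rintro z (rfl | rfl) <;> assumption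
    have := Set.ncard_le_ncard hsub s.toFinite
    rwa [Set.ncard_pair hxy] at this
  have hH2 : 2 ≤ H.verts.ncard := pair_card _ heH.fst_mem heH.snd_mem
  have hK2 : 2 ≤ K.verts.ncard := pair_card _ heK.fst_mem heK.snd_mem
  have hU2 : 2 ≤ (H ⊔ K).verts.ncard := by
    refine pair_card _ ?_ ?_ <;> rw [SimpleGraph.Subgraph.verts_sup]
    · exact Or.inl heH.fst_mem
    · exact Or.inl heH.snd_mem
  have hI2 : 2 ≤ (H ⊓ K).verts.ncard := by
    refine pair_card _ ?_ ?_ <;> rw [SimpleGraph.Subgraph.verts_inf]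
    · exact ⟨heH.fst_mem, heK.fst_mem⟩
    · exact ⟨heH.snd_mem, heK.snd_mem⟩
  have two_pos : ∀ m : ℕ, 2 ≤ m → (0:ℝ) < (m : ℝ) - 1 := by
    intro m hm
    have : (2:ℝ) ≤ (m:ℝ) := by exact_mod_cast hm
    linarith
  -- densities as equations
  have hmH : (H.edgeSet.ncard : ℝ) = a * ((H.verts.ncard : ℝ) - 1) := by
    have := hH.2
    rw [density, div_eq_iff (ne_of_gt (two_pos _ hH2))] at this
    rw [← haa] at this; linarith [this]
  have hmK : (K.edgeSet.ncard : ℝ) = a * ((K.verts.ncard : ℝ) - 1) := by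
    have := hK.2
    rw [density, div_eq_iff (ne_of_gt (two_pos _ hK2))] at this
    rw [← haa] at this; linarith [this]
  have ha0 : 0 ≤ a := by
    rw [haa, ← hH.2, density]
    exact div_nonneg (by positivity) (le_of_lt (two_pos _ hH2))
  -- union connected
  have hUconn : (H ⊔ K).Connected :=
    SimpleGraph.Subgraph.connected_sup hH.1.preconnected hK.1.preconnected ⟨x, by rw [SimpleGraph.Subgraph.verts_inf]; exact ⟨heH.fst_mem, heK.fst_mem⟩⟩
  -- bounds
  have hU : ((H ⊔ K).edgeSet.ncard : ℝ) ≤ a * (((H ⊔ K).verts.ncard : ℝ) - 1) :=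
    conn_bound G _ hUconn
  have hI : ((H ⊓ K).edgeSet.ncard : ℝ) ≤ a * (((H ⊓ K).verts.ncard : ℝ) - 1) :=
    gen_bound G a ha0 (fun W hW => conn_bound G W hW) (H ⊓ K).verts.ncard (H ⊓ K)
      le_rfl ⟨x, by rw [SimpleGraph.Subgraph.verts_inf]; exact ⟨heH.fst_mem, heK.fst_mem⟩⟩
  -- inclusion–exclusion
  have heIE : ((H ⊔ K).edgeSet.ncard : ℝ) + ((H ⊓ K).edgeSet.ncard : ℝ)
      = (H.edgeSet.ncard : ℝ) + (K.edgeSet.ncard : ℝ) := by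
    rw [SimpleGraph.Subgraph.edgeSet_sup, SimpleGraph.Subgraph.edgeSet_inf]
    exact_mod_cast Set.ncard_union_add_ncard_inter H.edgeSet K.edgeSet
      H.edgeSet.toFinite K.edgeSet.toFinite
  have hvIE : (((H ⊔ K).verts.ncard : ℝ)) + ((H ⊓ K).verts.ncard : ℝ)
      = (H.verts.ncard : ℝ) + (K.verts.ncard : ℝ) := by
    rw [SimpleGraph.Subgraph.verts_sup, SimpleGraph.Subgraph.verts_inf]
    exact_mod_cast Set.ncard_union_add_ncard_inter H.verts K.verts
      H.verts.toFinite K.verts.toFinite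
  -- both inequalities must be equalities
  have hUeq : ((H ⊔ K).edgeSet.ncard : ℝ) = a * (((H ⊔ K).verts.ncard : ℝ) - 1) := by
    nlinarith [hU, hI, heIE, hvIE, hmH, hmK]
  have hIeq : ((H ⊓ K).edgeSet.ncard : ℝ) = a * (((H ⊓ K).verts.ncard : ℝ) - 1) := by
    nlinarith [hU, hI, heIE, hvIE, hmH, hmK]
  refine ⟨⟨hUconn, ?_⟩, ?_⟩
  · rw [density, hUeq, mul_div_assoc,
      div_self (ne_of_gt (two_pos _ hU2)), mul_one]
  · rw [density, hIeq, mul_div_assoc,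
      div_self (ne_of_gt (two_pos _ hI2)), mul_one]
end

section
/- Monotonicity along the ancestor relation: if x is a core allocation of the arboricity game, P and Q are prime sets with Q an ancestor of P, then x_e ≤ x_f for every e ∈ P and f ∈ Q. -/
open scoped BigOperators

variable {V : Type*}

open SimpleGraph Set

section AuxLemmas

variable {V : Type*}

private lemma aux_forest_mono {A B : Set (Sym2 V)} (h : A ⊆ B) (hB : IsForestEdgeSet B) :
    IsForestEdgeSet A := by
  intro v c hc
  have hedges : ∀ e ∈ c.edges, e ∈ (fromEdgeSet B).edgeSet := by
    intro e he
    have := c.edges_subset_edgeSet he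
    rw [edgeSet_fromEdgeSet] at this ⊢
    exact ⟨h this.1, this.2⟩
  exact hB (c.transfer _ hedges) (hc.transfer hedges)

private lemma aux_singleton_forest (g : Sym2 V) : IsForestEdgeSet {g} := by
  intro v c hc
  have h3 := hc.three_le_length
  have hnodup := hc.isTrail.edges_nodup
  have hlen : c.edges.length = c.length := c.length_edges
  have hall : ∀ e ∈ c.edges, e = g := by
    intro e he
    have := c.edges_subset_edgeSet he
    rw [edgeSet_fromEdgeSet] at this
    exact this.1
  have hne1 : c.edges ≠ [] := by
    intro h; rw [h] at hlen; simp at hlen; omega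
  obtain ⟨e1, l1, h1⟩ := List.exists_cons_of_ne_nil hne1
  have hne2 : l1 ≠ [] := by
    intro h; rw [h] at h1; rw [h1] at hlen; simp at hlen; omega
  obtain ⟨e2, l2, h2⟩ := List.exists_cons_of_ne_nil hne2
  have hce : c.edges = e1 :: e2 :: l2 := by rw [h1, h2]
  have he1 : e1 = g := hall e1 (by rw [hce]; simp)
  have he2 : e2 = g := hall e2 (by rw [hce]; simp)
  rw [hce] at hnodup
  simp [he1, he2] at hnodup

private lemma aux_exists_cover [Fintype V] (S : Set (Sym2 V)) :
    ∃ F : Fin (arboricity S) → Set (Sym2 V),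
      (∀ i, IsForestEdgeSet (F i)) ∧ S ⊆ ⋃ i, F i := by
  classical
  have hne : {k : ℕ | ∃ F : Fin k → Set (Sym2 V),
      (∀ i, IsForestEdgeSet (F i)) ∧ S ⊆ ⋃ i, F i}.Nonempty := by
    refine ⟨Fintype.card (Sym2 V),
      fun i => {(Fintype.equivFin (Sym2 V)).symm i}, fun i => aux_singleton_forest _, ?_⟩
    intro g _
    exact Set.mem_iUnion.mpr ⟨Fintype.equivFin (Sym2 V) g, by simp⟩
  exact Nat.sInf_mem hne

private lemma aux_arb_forest_le_one {F : Set (Sym2 V)} (hF : IsForestEdgeSet F) :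
    arboricity F ≤ 1 := by
  apply Nat.sInf_le
  exact ⟨fun _ => F, fun _ => hF, fun g hg => Set.mem_iUnion.mpr ⟨0, hg⟩⟩

private noncomputable def sumOn (x : Sym2 V → ℝ) (A : Set (Sym2 V)) : ℝ := ∑ᶠ g ∈ A, x g

private lemma sumOn_eq [Fintype V] (x : Sym2 V → ℝ) (A : Set (Sym2 V)) :
    sumOn x A = ∑ g ∈ (Set.toFinite A).toFinset, x g := by
  rw [sumOn, ← finsum_mem_coe_finset, Set.Finite.coe_toFinset]

private lemma sumOn_insert [Fintype V] (x : Sym2 V → ℝ) {g : Sym2 V} {A : Set (Sym2 V)}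
    (hg : g ∉ A) : sumOn x (insert g A) = x g + sumOn x A := by
  classical
  rw [sumOn_eq, sumOn_eq]
  have h1 : (Set.toFinite (insert g A)).toFinset = insert g (Set.toFinite A).toFinset := by
    ext y
    simp only [Set.Finite.mem_toFinset, Set.mem_insert_iff, Finset.mem_insert]
  rw [h1, Finset.sum_insert (by simpa using hg)]

private lemma sumOn_diff_singleton [Fintype V] (x : Sym2 V → ℝ) {g : Sym2 V} {A : Set (Sym2 V)}
    (hg : g ∈ A) : sumOn x A = x g + sumOn x (A \ {g}) := by
  classical
  rw [sumOn_eq, sumOn_eq]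
  have h1 : (Set.toFinite (A \ {g})).toFinset = (Set.toFinite A).toFinset.erase g := by
    ext y
    simp only [Set.Finite.mem_toFinset, Set.mem_diff, Set.mem_singleton_iff, Finset.mem_erase]
    tauto
  rw [h1, Finset.add_sum_erase _ _ (by simpa using hg)]

private lemma sumOn_key [Fintype V] (x : Sym2 V → ℝ) (A : Set (Sym2 V)) :
    sumOn x A = ∑ g ∈ Finset.univ, A.indicator x g := by
  classical
  have h2 : ∀ g : Sym2 V, A.indicator x g = if g ∈ A then x g else 0 := fun g => rfl
  simp_rw [h2]
  rw [sumOn_eq, ← Finset.sum_filter]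
  congr 1
  ext g
  simp

private lemma sumOn_le_sum_of_cover [Fintype V] {x : Sym2 V → ℝ} (hx0 : ∀ g, 0 ≤ x g)
    {a : ℕ} (B : Fin a → Set (Sym2 V)) (A : Set (Sym2 V)) (hA : A ⊆ ⋃ i, B i) :
    sumOn x A ≤ ∑ i, sumOn x (B i) := by
  classical
  rw [sumOn_key]
  have h1 : ∑ i, sumOn x (B i)
      = ∑ i, ∑ g ∈ Finset.univ, (B i).indicator x g :=
    Finset.sum_congr rfl fun i _ => sumOn_key x (B i)
  rw [h1, Finset.sum_comm]
  apply Finset.sum_le_sum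
  intro g _
  have hnn : ∀ (C : Set (Sym2 V)), 0 ≤ C.indicator x g := fun C =>
    Set.indicator_nonneg (fun y _ => hx0 y) g
  by_cases hgA : g ∈ A
  · obtain ⟨i, hi⟩ := Set.mem_iUnion.mp (hA hgA)
    rw [Set.indicator_of_mem hgA]
    have h3 : x g = (B i).indicator x g := (Set.indicator_of_mem hi x).symm
    rw [h3]
    exact Finset.single_le_sum (fun j _ => hnn (B j)) (Finset.mem_univ i)
  · rw [Set.indicator_of_notMem hgA]
    exact Finset.sum_nonneg fun j _ => hnn (B j)

private lemma aux_ncard_partition [Fintype V] {a : ℕ} (B : Fin a → Set (Sym2 V))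
    (A : Set (Sym2 V)) (hcov : A ⊆ ⋃ i, B i) (hsub : ∀ i, B i ⊆ A)
    (hdisj : ∀ i j, i ≠ j → ∀ g, g ∈ B i → g ∈ B j → False) :
    A.ncard = ∑ i, (B i).ncard := by
  classical
  rw [Set.ncard_eq_toFinset_card A (Set.toFinite A)]
  have hA : (Set.toFinite A).toFinset
      = Finset.univ.biUnion (fun i => (Set.toFinite (B i)).toFinset) := by
    ext g
    simp only [Set.Finite.mem_toFinset, Finset.mem_biUnion, Finset.mem_univ, true_and]
    constructor
    · intro hg; exact Set.mem_iUnion.mp (hcov hg)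
    · rintro ⟨i, hi⟩; exact hsub i hi
  rw [hA, Finset.card_biUnion]
  · exact Finset.sum_congr rfl fun i _ =>
      (Set.ncard_eq_toFinset_card (B i) (Set.toFinite (B i))).symm
  · intro i _ j _ hij
    refine Finset.disjoint_left.mpr fun g hgi hgj => ?_
    exact hdisj i j hij g (by simpa using hgi) (by simpa using hgj)

private lemma aux_reach_closure {G₁ G₂ : SimpleGraph V} {K : Set V}
    (h : ∀ c d, c ∈ K → G₁.Adj c d → d ∈ K ∧ G₂.Reachable c d) :
    ∀ {c d : V}, c ∈ K → G₁.Reachable c d → d ∈ K ∧ G₂.Reachable c d := by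
  have main : ∀ {c d : V} (p : G₁.Walk c d), c ∈ K → d ∈ K ∧ G₂.Reachable c d := by
    intro c d p
    induction p with
    | nil => exact fun hc => ⟨hc, Reachable.refl _⟩
    | cons h' q ih =>
      intro hc
      obtain ⟨hK, hr⟩ := h _ _ hc h'
      obtain ⟨hK', hr'⟩ := ih hK
      exact ⟨hK', hr.trans hr'⟩
  intro c d hc hr
  obtain ⟨p⟩ := hr
  exact main p hc

private lemma aux_forest_insert {F : Set (Sym2 V)} {u v : V} (hF : IsForestEdgeSet F)
    (hnr : ¬ (fromEdgeSet F).Reachable u v) :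
    IsForestEdgeSet (insert s(u, v) F) := by
  intro w c hc
  by_cases hg : s(u, v) ∈ c.edges
  · have hkey := (adj_and_reachable_delete_edges_iff_exists_cycle
      (G := fromEdgeSet (insert s(u, v) F))).mpr ⟨w, c, hc, hg⟩
    refine hnr (hkey.2.mono ?_)
    intro a b hab
    rw [deleteEdges_adj] at hab
    obtain ⟨h1, h2⟩ := hab
    rw [fromEdgeSet_adj] at h1 ⊢
    refine ⟨?_, h1.2⟩
    rcases Set.mem_insert_iff.mp h1.1 with heq | hmem
    · exact absurd heq h2
    · exact hmem
  · have hedges : ∀ e ∈ c.edges, e ∈ (fromEdgeSet F).edgeSet := by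
      intro e he
      have h1 := c.edges_subset_edgeSet he
      rw [edgeSet_fromEdgeSet] at h1 ⊢
      refine ⟨?_, h1.2⟩
      rcases Set.mem_insert_iff.mp h1.1 with heq | hmem
      · exact absurd (heq ▸ he) hg
      · exact hmem
    exact hF (c.transfer _ hedges) (hc.transfer hedges)

private lemma aux_not_reachable_delete {F : Set (Sym2 V)} (hF : IsForestEdgeSet F) {u v : V}
    (p : (fromEdgeSet F).Walk u v) (hp : p.IsPath) {h : Sym2 V} (hh : h ∈ p.edges) :
    ¬ (fromEdgeSet (F \ {h})).Reachable u v := by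
  classical
  rintro ⟨q⟩
  have hq'edges : ∀ e ∈ (q.toPath : (fromEdgeSet (F \ {h})).Walk u v).edges,
      e ∈ (fromEdgeSet F).edgeSet := by
    intro e heq
    have h1 := Walk.edges_subset_edgeSet _ heq
    rw [edgeSet_fromEdgeSet] at h1 ⊢
    exact ⟨h1.1.1, h1.2⟩
  set q'' := (q.toPath : (fromEdgeSet (F \ {h})).Walk u v).transfer (fromEdgeSet F) hq'edges
    with hq''def
  have hq''path : q''.IsPath := Walk.IsPath.transfer _ q.toPath.isPath
  have huniq := hF.path_unique ⟨p, hp⟩ ⟨q'', hq''path⟩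
  have hmem : h ∈ q''.edges := by
    have : (⟨p, hp⟩ : (fromEdgeSet F).Path u v).val = q'' := by rw [huniq]
    rwa [← this]
  rw [hq''def, Walk.edges_transfer] at hmem
  have h1 := Walk.edges_subset_edgeSet _ hmem
  rw [edgeSet_fromEdgeSet] at h1
  exact h1.1.2 rfl

private lemma aux_exchange [Fintype V] {x : Sym2 V → ℝ} (hx0 : ∀ g, 0 ≤ x g)
    {E F : Set (Sym2 V)} (hFE : F ⊆ E) (hF : IsForestEdgeSet F) (hF1 : sumOn x F = 1)
    (hbound : ∀ F', F' ⊆ E → IsForestEdgeSet F' → sumOn x F' ≤ 1)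
    {t : ℝ} (ht : 0 ≤ t) {u v : V} (hg : s(u, v) ∈ E) (hxg : t < x s(u, v)) (hne : u ≠ v) :
    (fromEdgeSet {h | h ∈ F ∧ t < x h}).Reachable u v := by
  classical
  by_cases hgF : s(u, v) ∈ F
  · exact ((fromEdgeSet_adj {h | h ∈ F ∧ t < x h}).mpr ⟨⟨hgF, hxg⟩, hne⟩).reachable
  by_cases hr : (fromEdgeSet F).Reachable u v
  · obtain ⟨p0⟩ := hr
    set p := (p0.toPath : (fromEdgeSet F).Walk u v) with hpdef
    by_cases hall : ∀ h ∈ p.edges, t < x h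
    · refine ⟨p.transfer _ fun e he => ?_⟩
      have h1 := Walk.edges_subset_edgeSet _ he
      rw [edgeSet_fromEdgeSet] at h1 ⊢
      exact ⟨⟨h1.1, hall e he⟩, h1.2⟩
    · push_neg at hall
      obtain ⟨h, hhp, hht⟩ := hall
      exfalso
      have hhF : h ∈ F := by
        have h1 := Walk.edges_subset_edgeSet _ hhp
        rw [edgeSet_fromEdgeSet] at h1
        exact h1.1
      have hnr := aux_not_reachable_delete hF p p0.toPath.isPath hhp
      have hforest : IsForestEdgeSet (insert s(u, v) (F \ {h})) :=
        aux_forest_insert (aux_forest_mono Set.diff_subset hF) hnr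
      have hsub : insert s(u, v) (F \ {h}) ⊆ E :=
        Set.insert_subset hg (Set.diff_subset.trans hFE)
      have hb := hbound _ hsub hforest
      have hnotmem : s(u, v) ∉ F \ {h} := fun hmem => hgF hmem.1
      rw [sumOn_insert x hnotmem] at hb
      have hdiff := sumOn_diff_singleton x hhF
      linarith
  · exfalso
    have hforest := aux_forest_insert hF hr
    have hb := hbound _ (Set.insert_subset hg hFE) hforest
    rw [sumOn_insert x hgF] at hb
    linarith

/-- Build a subgraph from a vertex set and an edge set contained in it. -/
private def mkSub (G : SimpleGraph V) (W : Set V) (A : Set (Sym2 V)) (hAE : A ⊆ G.edgeSet)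
    (hAW : ∀ g ∈ A, ∀ w ∈ g, w ∈ W) : G.Subgraph where
  verts := W
  Adj a b := s(a, b) ∈ A
  adj_sub h := (G.mem_edgeSet).mp (hAE h)
  edge_vert h := hAW _ h _ (Sym2.mem_mk_left _ _)
  symm := ⟨fun a b hab => by
    change s(b, a) ∈ A
    rwa [Sym2.eq_swap]⟩

private lemma mkSub_edgeSet (G : SimpleGraph V) (W : Set V) (A : Set (Sym2 V))
    (hAE : A ⊆ G.edgeSet) (hAW : ∀ g ∈ A, ∀ w ∈ g, w ∈ W) :
    (mkSub G W A hAE hAW).edgeSet = A := by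
  ext g
  induction g using Sym2.ind with
  | _ a b => exact SimpleGraph.Subgraph.mem_edgeSet

private lemma mkSub_reach (G : SimpleGraph V) (W : Set V) (A : Set (Sym2 V))
    (hAE : A ⊆ G.edgeSet) (hAW : ∀ g ∈ A, ∀ w ∈ g, w ∈ W) :
    ∀ {a b : V} (_ : (fromEdgeSet A).Walk a b) (ha : a ∈ W) (hb : b ∈ W),
      (mkSub G W A hAE hAW).coe.Reachable ⟨a, ha⟩ ⟨b, hb⟩ := by
  intro a b p
  induction p with
  | nil =>
    intro ha hb
    exact Reachable.refl _
  | @cons a c b h' q ih =>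
    intro ha hb
    have h1 := (fromEdgeSet_adj _).mp h'
    have hc : c ∈ W := hAW _ h1.1 _ (Sym2.mem_mk_right _ _)
    have hadj : (mkSub G W A hAE hAW).coe.Adj ⟨a, ha⟩ ⟨c, hc⟩ := h1.1
    exact hadj.reachable.trans (ih hc hb)

private lemma aux_tree_count [Fintype V] (G : SimpleGraph V) (W : Set V) (A : Set (Sym2 V))
    (hAE : A ⊆ G.edgeSet) (hAW : ∀ g ∈ A, ∀ w ∈ g, w ∈ W) (u₀ : V) (hu₀ : u₀ ∈ W)
    (hacyc : IsForestEdgeSet A)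
    (hreach : ∀ w ∈ W, (fromEdgeSet A).Reachable u₀ w) :
    A.ncard + 1 = W.ncard := by
  classical
  set Sg := mkSub G W A hAE hAW with hSg
  haveI : Fintype ↥W := Fintype.ofFinite _
  haveI : Fintype ↥(Sg.coe.edgeSet) := Fintype.ofFinite _
  have htree : Sg.coe.IsTree := by
    constructor
    · rw [connected_iff]
      constructor
      · rintro ⟨a, ha⟩ ⟨b, hb⟩
        obtain ⟨pa⟩ := hreach a ha
        obtain ⟨pb⟩ := hreach b hb
        exact (mkSub_reach G W A hAE hAW pa hu₀ ha).symm.trans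
          (mkSub_reach G W A hAE hAW pb hu₀ hb)
      · exact ⟨⟨u₀, hu₀⟩⟩
    · intro v c hc
      have hinj : Function.Injective (Sg.hom : Sg.coe →g G) := Subtype.val_injective
      have hcyc : (c.map Sg.hom).IsCycle := (Walk.map_isCycle_iff_of_injective hinj).mpr hc
      have hedges : ∀ e ∈ (c.map Sg.hom).edges, e ∈ (fromEdgeSet A).edgeSet := by
        intro e he
        rw [Walk.edges_map] at he
        obtain ⟨e', he', rfl⟩ := List.mem_map.mp he
        have h1 := Walk.edges_subset_edgeSet _ he'
        induction e' using Sym2.ind with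
        | _ a b =>
          have hadj : Sg.coe.Adj a b := h1
          have hA : s(a.val, b.val) ∈ A := hadj
          have hnd : a.val ≠ b.val := by
            intro hab
            exact hadj.ne (Subtype.ext hab)
          rw [edgeSet_fromEdgeSet]
          exact ⟨by rwa [Sym2.map_pair_eq], by simp [Sym2.mk_isDiag_iff, hnd]⟩
      exact hacyc ((c.map Sg.hom).transfer _ hedges) (hcyc.transfer hedges)
  have hcard := htree.card_edgeFinset
  have hWcard : Fintype.card ↥(Sg.verts) = W.ncard := by
    rw [← Nat.card_eq_fintype_card]
    exact Nat.card_coe_set_eq W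
  have hecard : Sg.coe.edgeFinset.card = A.ncard := by
    have himg : Sym2.map (Subtype.val : ↥W → V) '' Sg.coe.edgeSet = A := by
      ext g
      constructor
      · rintro ⟨e', he', rfl⟩
        induction e' using Sym2.ind with
        | _ a b =>
          have hadj : Sg.coe.Adj a b := he'
          have hA : s(a.val, b.val) ∈ A := hadj
          rwa [Sym2.map_pair_eq]
      · intro hg
        induction g using Sym2.ind with
        | _ a b =>
          have ha : a ∈ W := hAW _ hg _ (Sym2.mem_mk_left _ _)
          have hb : b ∈ W := hAW _ hg _ (Sym2.mem_mk_right _ _)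
          refine ⟨s(⟨a, ha⟩, ⟨b, hb⟩), ?_, by rw [Sym2.map_pair_eq]⟩
          exact hg
    have h2 : (Sym2.map (Subtype.val : ↥W → V) '' Sg.coe.edgeSet).ncard
        = Sg.coe.edgeSet.ncard :=
      Set.ncard_image_of_injective _ (Sym2.map.injective Subtype.val_injective)
    rw [← himg, h2, Set.ncard_eq_toFinset_card' _]
    unfold edgeFinset
    convert rfl
  omega

end AuxLemmas

/-- monotonicity along the ancestor relation: if Q is an ancestor of
the prime set P (every densest subgraph containing P contains Q), then in every
core allocation edges of P get at most the value of edges of Q. -/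
theorem core_monotone_ancestor [Fintype V] (G : SimpleGraph V) (hG : G.Connected)
    (hcore : fracArboricity G = (arboricity G.edgeSet : ℝ))
    (P Q : Set (Sym2 V)) (hPE : P ⊆ G.edgeSet) (hQE : Q ⊆ G.edgeSet)
    (hP : ∀ H : G.Subgraph, IsDensest G H → P ⊆ H.edgeSet ∨ P ∩ H.edgeSet = ∅)
    (hQ : ∀ H : G.Subgraph, IsDensest G H → Q ⊆ H.edgeSet ∨ Q ∩ H.edgeSet = ∅)
    (hanc : ∀ H : G.Subgraph, IsDensest G H → P ⊆ H.edgeSet → Q ⊆ H.edgeSet)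
    (x : Sym2 V → ℝ) (hx : inCore G x) (e f : Sym2 V) (he : e ∈ P) (hf : f ∈ Q) :
    x e ≤ x f := by
  classical
  by_contra hcon
  push_neg at hcon
  obtain ⟨hx0, hxE, hxS⟩ := hx
  set E := G.edgeSet with hE
  set a := arboricity E with ha
  obtain ⟨F0, hF0forest, hF0cover⟩ := aux_exists_cover E
  set F : Fin a → Set (Sym2 V) := fun i => F0 i ∩ E with hF
  have hFforest : ∀ i, IsForestEdgeSet (F i) := fun i =>
    aux_forest_mono Set.inter_subset_left (hF0forest i)
  have hFE : ∀ i, F i ⊆ E := fun _ => Set.inter_subset_right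
  have hFcover : ∀ g ∈ E, ∃ i, g ∈ F i := by
    intro g hg
    obtain ⟨i, hi⟩ := Set.mem_iUnion.mp (hF0cover hg)
    exact ⟨i, ⟨hi, hg⟩⟩
  have heE : e ∈ E := hPE he
  have ht0 : 0 ≤ x f := hx0 f
  have hbound : ∀ F', F' ⊆ E → IsForestEdgeSet F' → sumOn x F' ≤ 1 := by
    intro F' h1 h2
    have h3 := hxS F' h1
    have h4 : (arboricity F' : ℝ) ≤ 1 := by
      exact_mod_cast aux_arb_forest_le_one h2
    exact le_trans h3 h4
  have hxEa : sumOn x E = (a : ℝ) := hxE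
  have hsum_le : ∀ i, sumOn x (F i) ≤ 1 := fun i => hbound _ (hFE i) (hFforest i)
  have hcover_ge : (a : ℝ) ≤ ∑ i, sumOn x (F i) := by
    rw [← hxEa]
    exact sumOn_le_sum_of_cover hx0 F E fun g hg => Set.mem_iUnion.mpr (hFcover g hg)
  have hsum_total : ∑ i, sumOn x (F i) ≤ (a : ℝ) := by
    calc ∑ i, sumOn x (F i) ≤ ∑ _i : Fin a, (1 : ℝ) :=
          Finset.sum_le_sum fun i _ => hsum_le i
      _ = a := by simp
  have hFi1 : ∀ i, sumOn x (F i) = 1 := by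
    by_contra hne'
    push_neg at hne'
    obtain ⟨i0, hi0⟩ := hne'
    have hlt : sumOn x (F i0) < 1 := lt_of_le_of_ne (hsum_le i0) hi0
    have hstrict : ∑ i, sumOn x (F i) < ∑ _i : Fin a, (1 : ℝ) :=
      Finset.sum_lt_sum (fun i _ => hsum_le i) ⟨i0, Finset.mem_univ i0, hlt⟩
    have h1 : (∑ _i : Fin a, (1 : ℝ)) = a := by simp
    linarith
  have hmult : ∀ g, ∀ i j, i ≠ j → g ∈ F i → g ∈ F j → x g = 0 := by
    intro g i j hij hgi hgj
    by_contra h0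
    have hgE : g ∈ E := hFE i hgi
    have hgpos : 0 < x g := lt_of_le_of_ne (hx0 g) (Ne.symm h0)
    have h1 : ∀ k, sumOn x (F k \ {g}) = sumOn x (F k) - (if g ∈ F k then x g else 0) := by
      intro k
      by_cases hk : g ∈ F k
      · rw [if_pos hk]
        have := sumOn_diff_singleton x hk
        linarith
      · rw [if_neg hk, Set.diff_singleton_eq_self hk]
        ring
    have hc2 : sumOn x (E \ {g}) ≤ ∑ k, sumOn x (F k \ {g}) := by
      apply sumOn_le_sum_of_cover hx0
      intro h hh
      obtain ⟨k, hk⟩ := hFcover h hh.1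
      exact Set.mem_iUnion.mpr ⟨k, hk, hh.2⟩
    have hc3 : x g + x g ≤ ∑ k, (if g ∈ F k then x g else 0) := by
      have hpair : ∑ k ∈ ({i, j} : Finset (Fin a)), (if g ∈ F k then x g else 0)
          = x g + x g := by
        rw [Finset.sum_pair hij, if_pos hgi, if_pos hgj]
      rw [← hpair]
      apply Finset.sum_le_sum_of_subset_of_nonneg (Finset.subset_univ _)
      intro k _ _
      split_ifs
      exacts [hx0 g, le_refl 0]
    have hc4 : sumOn x E = x g + sumOn x (E \ {g}) := sumOn_diff_singleton x hgE
    have hc5 : ∑ k, sumOn x (F k)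
        = ∑ k, sumOn x (F k \ {g}) + ∑ k, (if g ∈ F k then x g else 0) := by
      rw [← Finset.sum_add_distrib]
      apply Finset.sum_congr rfl
      intro k _
      rw [h1 k]
      ring
    linarith
  obtain ⟨u₀, v₀, he_eq⟩ : ∃ u v, e = s(u, v) := by
    induction e using Sym2.ind with
    | _ u v => exact ⟨u, v, rfl⟩
  subst he_eq
  have hadj : G.Adj u₀ v₀ := (G.mem_edgeSet).mp heE
  have hne : u₀ ≠ v₀ := hadj.ne
  set Egt := {g | g ∈ E ∧ x f < x g} with hEgt
  set Γ := fromEdgeSet Egt with hΓ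
  set K := {w | Γ.Reachable u₀ w} with hK
  have hu₀K : u₀ ∈ K := Reachable.refl u₀
  have heEgt : s(u₀, v₀) ∈ Egt := ⟨heE, hcon⟩
  have hΓuv : Γ.Adj u₀ v₀ := (fromEdgeSet_adj Egt).mpr ⟨heEgt, hne⟩
  have hv₀K : v₀ ∈ K := hΓuv.reachable
  have hKclosed : ∀ c d, c ∈ K → Γ.Adj c d → d ∈ K := fun c d hc h' =>
    Reachable.trans hc h'.reachable
  set EK := {g | g ∈ Egt ∧ ∀ w ∈ g, w ∈ K} with hEK
  have hEKE : EK ⊆ E := fun g hg => hg.1.1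
  set T : Fin a → Set (Sym2 V) := fun i => F i ∩ EK with hT
  have hstep : ∀ i, ∀ c d, c ∈ K → Γ.Adj c d →
      d ∈ K ∧ (fromEdgeSet (T i)).Reachable c d := by
    intro i c d hc hΓcd
    have h1 := (fromEdgeSet_adj Egt).mp hΓcd
    have hd : d ∈ K := hKclosed c d hc hΓcd
    refine ⟨hd, ?_⟩
    have hreach1 := aux_exchange hx0 (hFE i) (hFforest i) (hFi1 i) hbound ht0
      h1.1.1 h1.1.2 h1.2
    refine (aux_reach_closure (fun c' d' hc' hadj' => ?_) hc hreach1).2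
    have h2 := (fromEdgeSet_adj _).mp hadj'
    have hEgt' : s(c', d') ∈ Egt := ⟨hFE i h2.1.1, h2.1.2⟩
    have hd' : d' ∈ K := hKclosed c' d' hc' ((fromEdgeSet_adj Egt).mpr ⟨hEgt', h2.2⟩)
    have hTmem : s(c', d') ∈ T i := by
      refine ⟨h2.1.1, hEgt', fun w hw => ?_⟩
      rcases Sym2.mem_iff.mp hw with rfl | rfl
      exacts [hc', hd']
    exact ⟨hd', ((fromEdgeSet_adj (T i)).mpr ⟨hTmem, h2.2⟩).reachable⟩
  have hKreach : ∀ i, ∀ w ∈ K, (fromEdgeSet (T i)).Reachable u₀ w := by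
    intro i w hw
    exact (aux_reach_closure (hstep i) hu₀K hw).2
  have ha0 : 0 < a := by
    rcases Nat.eq_zero_or_pos a with h0 | h
    · obtain ⟨i, _⟩ := hFcover _ heE
      have := i.isLt
      omega
    · exact h
  have hTcount : ∀ i, (T i).ncard + 1 = K.ncard := by
    intro i
    apply aux_tree_count G K (T i) (fun g hg => hEKE hg.2) (fun g hg => hg.2.2) u₀ hu₀K
    · exact aux_forest_mono Set.inter_subset_left (hFforest i)
    · exact fun w hw => hKreach i w hw
  have hdisjT : ∀ i j, i ≠ j → ∀ g, g ∈ T i → g ∈ T j → False := by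
    intro i j hij g hgi hgj
    have h1 := hmult g i j hij hgi.1 hgj.1
    have h2 : x f < x g := hgi.2.1.2
    linarith
  have hcardEK : EK.ncard = ∑ i, (T i).ncard := by
    apply aux_ncard_partition T EK
    · intro g hg
      obtain ⟨i, hi⟩ := hFcover g (hEKE hg)
      exact Set.mem_iUnion.mpr ⟨i, hi, hg⟩
    · exact fun i => Set.inter_subset_right
    · exact hdisjT
  have hK2 : 2 ≤ K.ncard := by
    have h1 : 1 < K.ncard := (Set.one_lt_ncard (Set.toFinite K)).mpr
      ⟨u₀, hu₀K, v₀, hv₀K, hne⟩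
    omega
  have hEKcard : EK.ncard = a * (K.ncard - 1) := by
    rw [hcardEK, Finset.sum_congr rfl fun i _ => (by
      have := hTcount i
      omega : (T i).ncard = K.ncard - 1), Finset.sum_const, Finset.card_univ,
      Fintype.card_fin, smul_eq_mul]
  set Sg := mkSub G K EK (fun g hg => hEKE hg) (fun g hg => hg.2) with hSgdef
  have hSgedge : Sg.edgeSet = EK := mkSub_edgeSet G K EK _ _
  have hconn : Sg.Connected := by
    rw [SimpleGraph.Subgraph.connected_iff', connected_iff]
    constructor
    · rintro ⟨b, hb⟩ ⟨c, hc⟩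
      have hmono : fromEdgeSet (T ⟨0, ha0⟩) ≤ fromEdgeSet EK :=
        fromEdgeSet_mono Set.inter_subset_right
      obtain ⟨pb⟩ := (hKreach ⟨0, ha0⟩ b hb).mono hmono
      obtain ⟨pc⟩ := (hKreach ⟨0, ha0⟩ c hc).mono hmono
      exact (mkSub_reach G K EK _ _ pb hu₀K hb).symm.trans
        (mkSub_reach G K EK _ _ pc hu₀K hc)
    · exact ⟨⟨u₀, hu₀K⟩⟩
  have hdens : density G Sg = (a : ℝ) := by
    unfold density
    have hv : Sg.verts = K := rfl
    rw [hSgedge, hv, hEKcard]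
    have h1 : ((a * (K.ncard - 1) : ℕ) : ℝ) = (a : ℝ) * ((K.ncard : ℝ) - 1) := by
      have h2 : (1 : ℕ) ≤ K.ncard := by omega
      push_cast [Nat.cast_sub h2]
      ring
    rw [h1]
    have h2 : (K.ncard : ℝ) - 1 ≠ 0 := by
      have h3 : (2 : ℝ) ≤ (K.ncard : ℝ) := by exact_mod_cast hK2
      linarith
    field_simp
  have hdensest : IsDensest G Sg := by
    refine ⟨hconn, ?_⟩
    rw [hdens, hcore]
  have heEK : s(u₀, v₀) ∈ EK := by
    refine ⟨heEgt, fun w hw => ?_⟩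
    rcases Sym2.mem_iff.mp hw with rfl | rfl
    exacts [hu₀K, hv₀K]
  rcases hP Sg hdensest with hPsub | hPdisj
  · have hQsub := hanc Sg hdensest hPsub
    have hfEK : f ∈ EK := by
      have h1 := hQsub hf
      rwa [hSgedge] at h1
    exact absurd hfEK.1.2 (lt_irrefl (x f))
  · have h1 : s(u₀, v₀) ∈ P ∩ Sg.edgeSet := ⟨he, by rw [hSgedge]; exact heEK⟩
    rw [hPdisj] at h1
    exact h1
end
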